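/- arXiv:2309.15997 — 12 statements merged into one kernel-verified Lean document; each statement's English description precedes it below -/
import Mathlib

section
/- For every ω ∈ [ω̲, ω̄] there exists a unique y ∈ [0, min{κ, q}] satisfying the adaptive-priority-mechanism fixed-point equation y = min{ κ·(1 − max{ω − γ(1−βy), 0}), q }, and this unique solution equals κ(1+γ−ω)/(1+κγβ). -/
open Set

/-- For every ω ∈ [ω̲, ω̄] there exists a unique y ∈ [0, min{κ, q}] satisfying the
adaptive-priority-mechanism fixed-point equation
`y = min{ κ·(1 − max{ω − γ(1−βy), 0}), q }`, and this unique solution equals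
`κ(1+γ−ω)/(1+κγβ)`. -/
theorem stmt_1 (q κ γ β ωl ωh : ℝ)
    (hq0 : 0 < q) (hq1 : q ≤ 1) (hκ : 0 < κ) (hγ : 0 ≤ γ) (hβ : 0 ≤ β)
    (hωl : 0 ≤ ωl) (hωlt : ωl < ωh) (hωh : ωh ≤ 1)
    (hreg1 : (1 + γ - ωl)/(1/κ + γ*β) + κ*(ωh - ωl) < min κ q)
    (hreg2 : κ*(1 - ωl) < (1 + γ - ωh)/(1/κ + γ*β)) :
    ∀ ω ∈ Set.Icc ωl ωh,
      (∃! y : ℝ, y ∈ Set.Icc (0:ℝ) (min κ q) ∧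
        y = min (κ * (1 - max (ω - γ*(1 - β*y)) 0)) q) ∧
      (∀ y : ℝ, (y ∈ Set.Icc (0:ℝ) (min κ q) ∧
          y = min (κ * (1 - max (ω - γ*(1 - β*y)) 0)) q) →
        y = κ*(1+γ-ω)/(1+κ*γ*β)) := by
  intro ω hω
  obtain ⟨hω1, hω2⟩ := hω
  have hd : (0:ℝ) < 1 + κ*γ*β := by positivity
  have hk : (0:ℝ) < 1/κ + γ*β := by positivity
  set y := κ*(1+γ-ω)/(1+κ*γ*β) with hy
  have hy_eq : y * (1 + κ*γ*β) = κ*(1+γ-ω) := by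
    rw [hy]; field_simp
  -- A is the left term of hreg1
  have hAeq : ((1 + γ - ωl)/(1/κ + γ*β)) * (1/κ + γ*β) = 1 + γ - ωl := by
    field_simp
  have hκβ : κ * (1/κ + γ*β) = 1 + κ*γ*β := by
    field_simp
  -- key : γ - ωl < κ*γ*β
  have hAκ : (1 + γ - ωl)/(1/κ + γ*β) < κ := by
    have h1 : min κ q ≤ κ := min_le_left _ _
    nlinarith [mul_pos hκ (sub_pos.mpr hωlt)]
  have key : 1 + γ - ωl < 1 + κ*γ*β := by
    nlinarith [mul_lt_mul_of_pos_right hAκ hk]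
  -- y under the alternative denominator
  have hyk : y * (1/κ + γ*β) = 1 + γ - ω := by
    rw [hy]; field_simp
  have hy0 : 0 ≤ y := by
    apply div_nonneg _ hd.le
    nlinarith
  have hylt : y < min κ q := by
    have hle : y ≤ (1 + γ - ωl)/(1/κ + γ*β) := by
      nlinarith [mul_nonneg (sub_nonneg.mpr hω1) hk.le]
    have : κ*(ωh - ωl) > 0 := by nlinarith
    linarith
  have hmaxpos : 0 ≤ ω - γ*(1 - β*y) := by
    have h2 : (ω - γ*(1 - β*y)) * (1 + κ*γ*β) = ω - γ + κ*γ*β := by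
      linear_combination (γ*β) * hy_eq
    nlinarith
  have hyfix : y = min (κ * (1 - max (ω - γ*(1 - β*y)) 0)) q := by
    rw [max_eq_left hmaxpos]
    have h3 : κ * (1 - (ω - γ*(1 - β*y))) = y := by linear_combination -hy_eq
    rw [h3, min_eq_left]
    exact le_of_lt (lt_of_lt_of_le hylt (min_le_right _ _))
  have anti : ∀ a b : ℝ, a ≤ b →
      min (κ * (1 - max (ω - γ*(1 - β*b)) 0)) q ≤
      min (κ * (1 - max (ω - γ*(1 - β*a)) 0)) q := by
    intro a b hab
    apply min_le_min _ le_rfl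
    have h4 : max (ω - γ*(1 - β*a)) 0 ≤ max (ω - γ*(1 - β*b)) 0 :=
      max_le_max (by linarith [mul_le_mul_of_nonneg_left hab (mul_nonneg hγ hβ)]) le_rfl
    linarith [mul_le_mul_of_nonneg_left h4 hκ.le]
  have uniq : ∀ z : ℝ, (z ∈ Set.Icc (0:ℝ) (min κ q) ∧
      z = min (κ * (1 - max (ω - γ*(1 - β*z)) 0)) q) → z = y := by
    intro z ⟨_, hzfix⟩
    rcases le_total z y with h | h
    · have := anti z y h
      rw [← hzfix, ← hyfix] at this
      exact le_antisymm h this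
    · have := anti y z h
      rw [← hzfix, ← hyfix] at this
      exact le_antisymm this h
  refine ⟨⟨y, ⟨⟨hy0, hylt.le⟩, hyfix⟩, uniq⟩, uniq⟩
end

section
/- Define the quota value function 𝒰_Q(Q) = ∫ U( min{ max{Q, κ(1−ω)}, min{κ,q} }, ω) dΛ(ω) for Q ∈ [0, min{κ,q}]. Then Q* := (1+γ−E[ω])/(1/κ+γβ) satisfies κ(1−ω̲) < Q* < min{κ,q}, Q* maximizes 𝒰_Q over [0, min{κ,q}], and the optimal quota value is V_Q := 𝒰_Q(Q*) = q·E[ω] + (1+γ−E[ω])·Q* − (1/2)(1/κ+γβ)·Q*². -/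
open Set MeasureTheory

/-- Authority payoff. -/
noncomputable def U (q κ γ β x ω : ℝ) : ℝ :=
  q * ω + (1 + γ - ω) * x - (1/2) * (1/κ + γ*β) * x^2

/-- Mean of ω under Λ. -/
noncomputable def Emean (Λ : Measure ℝ) : ℝ := ∫ ω, ω ∂Λ

/-- Value of the quota policy Q (processed first), which admits the
highest-scoring measure `min{max{Q, κ(1−ω)}, min{κ,q}}` of minority students. -/
noncomputable def UQ (q κ γ β : ℝ) (Λ : Measure ℝ) (Q : ℝ) : ℝ :=
  ∫ ω, U q κ γ β (min (max Q (κ*(1-ω))) (min κ q)) ω ∂Λ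

lemma UQ_int (q κ γ β ωl ωh Q : ℝ) (Λ : Measure ℝ) [IsProbabilityMeasure Λ]
    (hq0 : 0 < q) (hκ : 0 < κ) (hγ : 0 ≤ γ) (hβ : 0 ≤ β)
    (hωl : 0 ≤ ωl) (hωh : ωh ≤ 1) (hQ0 : 0 ≤ Q)
    (hae : ∀ᵐ ω ∂Λ, ω ∈ Set.Icc ωl ωh) :
    Integrable (fun ω => U q κ γ β (min (max Q (κ*(1-ω))) (min κ q)) ω) Λ := by
  have hc0 : (0:ℝ) < 1/κ + γ*β := by positivity
  set m := min κ q with hm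
  have hm0 : 0 < m := lt_min hκ hq0
  apply Integrable.mono' (integrable_const (q + (1+γ)*m + (1/2)*(1/κ+γ*β)*m^2))
  · apply Continuous.aestronglyMeasurable
    unfold U
    fun_prop
  · filter_upwards [hae] with ω hω
    set x := min (max Q (κ*(1-ω))) m with hx
    have hx0 : 0 ≤ x := le_min (le_trans hQ0 (le_max_left _ _)) hm0.le
    have hxm : x ≤ m := min_le_right _ _
    have hω0 : 0 ≤ ω := le_trans hωl hω.1
    have hω1 : ω ≤ 1 := le_trans hω.2 hωh
    unfold U
    rw [Real.norm_eq_abs, abs_le]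
    have hsq : x^2 ≤ m^2 := by nlinarith [mul_le_mul hxm hxm hx0 hm0.le]
    have h1 : 0 ≤ 1 + γ - ω := by linarith
    constructor
    · nlinarith [mul_nonneg hq0.le hω0, mul_nonneg h1 hx0,
        mul_le_mul_of_nonneg_left hsq hc0.le]
    · nlinarith [mul_nonneg hc0.le (sq_nonneg x),
        mul_le_mul (by linarith : 1 + γ - ω ≤ 1 + γ) hxm hx0 (by linarith : (0:ℝ) ≤ 1 + γ)]

lemma UQ_eval (q κ γ β ωl ωh y : ℝ) (Λ : Measure ℝ) [IsProbabilityMeasure Λ]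
    (hκ : 0 < κ)
    (hae : ∀ᵐ ω ∂Λ, ω ∈ Set.Icc ωl ωh)
    (hint : Integrable (fun ω => ω) Λ)
    (hKy : κ*(1-ωl) ≤ y) (hym : y ≤ min κ q) :
    UQ q κ γ β Λ y
      = q * Emean Λ + (1 + γ - Emean Λ)*y - (1/2)*(1/κ+γ*β)*y^2 := by
  unfold UQ
  rw [integral_congr_ae (g := fun ω => (q - y)*ω + ((1+γ)*y - (1/2)*(1/κ+γ*β)*y^2))]
  · rw [integral_add (hint.const_mul _) (integrable_const _), integral_const_mul,
      integral_const, probReal_univ]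
    show (q - y) * Emean Λ + _ = _
    simp only [ENNReal.toReal_one, one_smul]
    ring
  · filter_upwards [hae] with ω hω
    have h1 : κ*(1-ω) ≤ y :=
      le_trans (by nlinarith [hω.1, hκ.le] : κ*(1-ω) ≤ κ*(1-ωl)) hKy
    rw [max_eq_left h1, min_eq_left hym]
    unfold U; ring

lemma U_mono (q κ γ β x y ω : ℝ) (hc0 : (0:ℝ) < 1/κ + γ*β)
    (hxy : x ≤ y) (hy : (1/κ + γ*β)*y ≤ 1 + γ - ω) :
    U q κ γ β x ω ≤ U q κ γ β y ω := by
  unfold U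
  nlinarith [mul_nonneg hc0.le (sq_nonneg (y - x)),
    mul_nonneg (sub_nonneg.2 hxy) (sub_nonneg.2 hy)]

lemma quad_max (c A B g : ℝ) (hc : 0 < c) :
    B + A*g - (1/2)*c*g^2 ≤ B + A*(A/c) - (1/2)*c*(A/c)^2 := by
  have h : c*(A/c) = A := mul_div_cancel₀ _ hc.ne'
  have h2 : c*(A/c)*g = A*g := by rw [h]
  have h3 : c*(A/c)*(A/c) = A*(A/c) := by rw [h]
  nlinarith [mul_nonneg hc.le (sq_nonneg (A/c - g)), h2, h3]

/-- The quota `Q* = (1+γ−E[ω])/(1/κ+γβ)` satisfies `κ(1−ω̲) < Q* < min{κ,q}`,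
maximizes the quota value over `[0, min{κ,q}]`, and its value is
`q·E[ω] + (1+γ−E[ω])·Q* − (1/2)(1/κ+γβ)·Q*²`. -/
theorem stmt_3 (q κ γ β ωl ωh : ℝ)
    (hq0 : 0 < q) (hq1 : q ≤ 1) (hκ : 0 < κ) (hγ : 0 ≤ γ) (hβ : 0 ≤ β)
    (hωl : 0 ≤ ωl) (hωlt : ωl < ωh) (hωh : ωh ≤ 1)
    (hreg1 : (1 + γ - ωl)/(1/κ + γ*β) + κ*(ωh - ωl) < min κ q)
    (hreg2 : κ*(1 - ωl) < (1 + γ - ωh)/(1/κ + γ*β))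
    (Λ : Measure ℝ) [IsProbabilityMeasure Λ] (hsupp : Λ (Set.Icc ωl ωh)ᶜ = 0) :
    κ*(1 - ωl) < (1 + γ - Emean Λ)/(1/κ + γ*β) ∧
    (1 + γ - Emean Λ)/(1/κ + γ*β) < min κ q ∧
    (∀ Q ∈ Set.Icc (0:ℝ) (min κ q),
      UQ q κ γ β Λ Q ≤ UQ q κ γ β Λ ((1 + γ - Emean Λ)/(1/κ + γ*β))) ∧
    UQ q κ γ β Λ ((1 + γ - Emean Λ)/(1/κ + γ*β))
      = q * Emean Λ + (1 + γ - Emean Λ) * ((1 + γ - Emean Λ)/(1/κ + γ*β))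
        - (1/2) * (1/κ + γ*β) * ((1 + γ - Emean Λ)/(1/κ + γ*β))^2 := by
  have hc0 : (0:ℝ) < 1/κ + γ*β := by positivity
  have hae : ∀ᵐ ω ∂Λ, ω ∈ Set.Icc ωl ωh := by
    rw [ae_iff]
    simpa [compl_def] using hsupp
  have hint : Integrable (fun ω => ω) Λ := by
    apply Integrable.mono' (integrable_const ωh) aestronglyMeasurable_id
    filter_upwards [hae] with ω hω
    have h1 := hω.1
    have h2 := hω.2
    simp only [id_eq, Real.norm_eq_abs, abs_le]
    constructor <;> linarith
  have hEl : ωl ≤ Emean Λ := by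
    have h := integral_mono_ae (integrable_const ωl) hint (hae.mono fun ω h => h.1)
    rw [integral_const] at h
    simpa [Emean] using h
  have hEh : Emean Λ ≤ ωh := by
    have h := integral_mono_ae hint (integrable_const ωh) (hae.mono fun ω h => h.2)
    rw [integral_const] at h
    simpa [Emean] using h
  have hKQ : κ*(1 - ωl) < (1 + γ - Emean Λ)/(1/κ + γ*β) := by
    refine lt_of_lt_of_le hreg2 ?_
    gcongr <;> linarith
  have hQm : (1 + γ - Emean Λ)/(1/κ + γ*β) < min κ q := by
    have h1 : (1 + γ - Emean Λ)/(1/κ + γ*β) ≤ (1 + γ - ωl)/(1/κ + γ*β) := by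
      gcongr <;> linarith
    nlinarith [mul_pos hκ (sub_pos.2 hωlt)]
  have hvalQs := UQ_eval q κ γ β ωl ωh ((1 + γ - Emean Λ)/(1/κ + γ*β)) Λ hκ hae hint
    hKQ.le hQm.le
  refine ⟨hKQ, hQm, ?_, hvalQs⟩
  intro Q hQ
  obtain ⟨hQ0, hQmle⟩ := hQ
  have hgK : κ*(1-ωl) ≤ max Q (κ*(1-ωl)) := le_max_right _ _
  have hg0 : 0 ≤ max Q (κ*(1-ωl)) := le_trans hQ0 (le_max_left _ _)
  have hgm : max Q (κ*(1-ωl)) ≤ min κ q := max_le hQmle (le_trans hKQ.le hQm.le)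
  have hvalg := UQ_eval q κ γ β ωl ωh (max Q (κ*(1-ωl))) Λ hκ hae hint hgK hgm
  have step1 : UQ q κ γ β Λ Q ≤ UQ q κ γ β Λ (max Q (κ*(1-ωl))) := by
    refine integral_mono_ae
      (UQ_int q κ γ β ωl ωh Q Λ hq0 hκ hγ hβ hωl hωh hQ0 hae)
      (UQ_int q κ γ β ωl ωh (max Q (κ*(1-ωl))) Λ hq0 hκ hγ hβ hωl hωh hg0 hae) ?_
    filter_upwards [hae] with ω hω
    have hωK : κ*(1-ω) ≤ κ*(1-ωl) := by nlinarith [hω.1]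
    have hcol : min (max (max Q (κ*(1-ωl))) (κ*(1-ω))) (min κ q) = max Q (κ*(1-ωl)) := by
      rw [max_eq_left (le_trans hωK hgK), min_eq_left hgm]
    rw [hcol]
    rcases le_or_gt Q (κ*(1-ωl)) with h | h
    · rw [max_eq_right h]
      refine U_mono q κ γ β _ _ ω hc0 (min_le_of_left_le (max_le h hωK)) ?_
      have h2 := (lt_div_iff₀ hc0).mp hreg2
      nlinarith [hω.2]
    · rw [max_eq_left h.le, max_eq_left (le_trans hωK h.le), min_eq_left hQmle]
  have step2 : UQ q κ γ β Λ (max Q (κ*(1-ωl))) ≤ UQ q κ γ β Λ ((1 + γ - Emean Λ)/(1/κ + γ*β)) := by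
    rw [hvalg, hvalQs]
    have := quad_max (1/κ + γ*β) (1 + γ - Emean Λ) (q * Emean Λ) (max Q (κ*(1-ωl))) hc0
    linarith
  linarith
end

section
/- Define the priority value function 𝒰_P(α) = ∫ U( min{ κ(1+α−ω), min{κ,q} }, ω) dΛ(ω) for α ≥ 0, and let Q* := (1+γ−E[ω])/(1/κ+γβ). Then α* := Q*/κ − 1 + E[ω] is nonnegative, α* maximizes 𝒰_P over [0, ∞), and the optimal priority value is V_P := 𝒰_P(α*) = q·E[ω] + (1+γ−E[ω])·Q* − (1/2)(1/κ+γβ)·Q*² + (κ/2)(1−κγβ)·Var[ω]. -/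
open Set MeasureTheory

/-- Variance of ω under Λ. -/
noncomputable def Vvar (Λ : Measure ℝ) : ℝ := ∫ ω, (ω - Emean Λ)^2 ∂Λ

/-- Value of the priority policy α, which admits the highest-scoring measure
`min{κ(1+α−ω), min{κ,q}}` of minority students in state ω. -/
noncomputable def UP (q κ γ β : ℝ) (Λ : Measure ℝ) (α : ℝ) : ℝ :=
  ∫ ω, U q κ γ β (min (κ*(1+α-ω)) (min κ q)) ω ∂Λ

lemma keyQuad (s ml x y u : ℝ) (hs : 0 ≤ s) (hml : 0 < ml) (hx : 0 ≤ x) (hy : 0 ≤ y)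
    (hcon : x + (1+s)*y ≤ (1+s)*ml) (hu1 : ml ≤ u) (hu2 : u ≤ ml + x + y) :
    x*(2*s*(u-(ml+x))*u - (1+s)*u^2) ≤ (2*s*ml*x+(1+s)*ml^2)*(u-(ml+x)) := by
  have hslack : 0 ≤ (1+s)*ml - x - (1+s)*y := by linarith
  have hρ : 0 ≤ 2*s*ml*x+(1+s)*ml^2 := by positivity
  have hρmb : 0 ≤ (2*s*ml*x+(1+s)*ml^2)*(ml+x) := mul_nonneg hρ (by linarith)
  have hF2 : 0 ≤ x*(1-s)*ml*u + (2*s*ml*x+(1+s)*ml^2)*(ml+x) := by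
    rcases le_total s 1 with h1 | h1
    · have : 0 ≤ x*(1-s)*ml*u :=
        mul_nonneg (mul_nonneg (mul_nonneg hx (by linarith)) hml.le) (by linarith)
      linarith
    · have h2 : x*(1-s)*ml*(ml+x+y) ≤ x*(1-s)*ml*u := by
        apply mul_le_mul_of_nonpos_left (by linarith)
        nlinarith [mul_nonneg hx hml.le]
      have h3 : 0 ≤ x*(1-s)*ml*(ml+x+y) + (2*s*ml*x+(1+s)*ml^2)*(ml+x) := by
        nlinarith [mul_nonneg (mul_nonneg (mul_nonneg (by linarith : (0:ℝ) ≤ s-1) hx) hml.le) hslack,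
          mul_nonneg (mul_nonneg hx hml.le) hml.le,
          mul_nonneg (mul_nonneg hx hx) hml.le, pow_nonneg hml.le 3,
          mul_nonneg (mul_nonneg (mul_nonneg hs hx) hx) hml.le,
          mul_nonneg (mul_nonneg (mul_nonneg hs hx) hml.le) hml.le]
      linarith
  have key : ml*((2*s*ml*x+(1+s)*ml^2)*(u-(ml+x)) - x*(2*s*(u-(ml+x))*u - (1+s)*u^2))
      = (u-ml)*(x*(1-s)*ml*u + (2*s*ml*x+(1+s)*ml^2)*(ml+x)) := by ring
  nlinarith [mul_nonneg (by linarith : (0:ℝ) ≤ u - ml) hF2, hml]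

lemma keyC (s ml x y t : ℝ) (hs : 0 ≤ s) (hml : 0 < ml) (hx : 0 ≤ x) (hy : 0 ≤ y)
    (hcon : x + (1+s)*y ≤ (1+s)*ml) :
    x*(2*s*t*y - (1+s)*t^2) ≤ (2*s*ml*x+(1+s)*ml^2)*y := by
  have hslack : 0 ≤ (1+s)*ml - x - (1+s)*y := by linarith
  have h1s : (0:ℝ) < 1+s := by linarith
  have hD : s^2*x*y ≤ (1+s)*(2*s*ml*x+(1+s)*ml^2) := by
    have e1 : 0 ≤ s^2*x*((1+s)*ml - x - (1+s)*y) :=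
      mul_nonneg (mul_nonneg (sq_nonneg s) hx) hslack
    have e2 : 0 ≤ s*(1+s)*x*ml*(s+2) :=
      mul_nonneg (mul_nonneg (mul_nonneg (mul_nonneg hs h1s.le) hx) hml.le) (by linarith)
    have e3 : (0:ℝ) ≤ s^2*x^2 := by positivity
    have e4 : (0:ℝ) ≤ (1+s)^3*ml^2 := by positivity
    have hD' : (1+s)*(s^2*x*y) ≤ (1+s)*((1+s)*(2*s*ml*x+(1+s)*ml^2)) := by
      nlinarith [e1, e2, e3, e4]
    exact le_of_mul_le_mul_left hD' h1s
  rcases hx.eq_or_lt with h | hxpos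
  · rw [← h]; ring_nf; positivity
  · nlinarith [sq_nonneg (2*(1+s)*x*t - 2*s*x*y),
      mul_nonneg (mul_nonneg hx hy) (sub_nonneg.2 hD),
      mul_pos h1s hxpos]

lemma keyA (s ml x y t m : ℝ) (hs : 0 ≤ s) (hml : 0 < ml) (hx : 0 ≤ x) (hy : 0 ≤ y)
    (hcon : x + (1+s)*y ≤ (1+s)*ml) (htl : ml ≤ t)
    (hm1 : ml ≤ m) (hm2 : m ≤ ml + x + y) :
    x*(2*s*(m-(ml+x))*(min t m) - (1+s)*(min t m)^2)
      ≤ (2*s*ml*x+(1+s)*ml^2)*(m-(ml+x)) := by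
  rcases le_total t m with h | h
  · rw [min_eq_left h]
    have hPt := keyQuad s ml x y t hs hml hx hy hcon htl (le_trans h hm2)
    have hPmh := keyC s ml x y t hs hml hx hy hcon
    rcases le_total 0 ((2*s*ml*x+(1+s)*ml^2) - x*(2*s*t)) with hsl | hsl
    · nlinarith [mul_nonneg hsl (sub_nonneg.2 h)]
    · nlinarith [mul_nonneg (neg_nonneg.2 hsl) (sub_nonneg.2 hm2)]
  · rw [min_eq_right h]
    exact keyQuad s ml x y m hs hml hx hy hcon hm1 hm2

set_option maxHeartbeats 1000000 in
/-- With `Q* = (1+γ−E[ω])/(1/κ+γβ)`, the priority `α* = Q*/κ − 1 + E[ω]` is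
nonnegative, maximizes the priority value over `[0,∞)`, and its value is
`q·E[ω] + (1+γ−E[ω])·Q* − (1/2)(1/κ+γβ)·Q*² + (κ/2)(1−κγβ)·Var[ω]`. -/
theorem stmt_4 (q κ γ β ωl ωh : ℝ)
    (hq0 : 0 < q) (hq1 : q ≤ 1) (hκ : 0 < κ) (hγ : 0 ≤ γ) (hβ : 0 ≤ β)
    (hωl : 0 ≤ ωl) (hωlt : ωl < ωh) (hωh : ωh ≤ 1)
    (hreg1 : (1 + γ - ωl)/(1/κ + γ*β) + κ*(ωh - ωl) < min κ q)
    (hreg2 : κ*(1 - ωl) < (1 + γ - ωh)/(1/κ + γ*β))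
    (Λ : Measure ℝ) [IsProbabilityMeasure Λ] (hsupp : Λ (Set.Icc ωl ωh)ᶜ = 0) :
    0 ≤ (1 + γ - Emean Λ)/(1/κ + γ*β) / κ - 1 + Emean Λ ∧
    (∀ α : ℝ, 0 ≤ α →
      UP q κ γ β Λ α
        ≤ UP q κ γ β Λ ((1 + γ - Emean Λ)/(1/κ + γ*β) / κ - 1 + Emean Λ)) ∧
    UP q κ γ β Λ ((1 + γ - Emean Λ)/(1/κ + γ*β) / κ - 1 + Emean Λ)
      = q * Emean Λ + (1 + γ - Emean Λ) * ((1 + γ - Emean Λ)/(1/κ + γ*β))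
        - (1/2) * (1/κ + γ*β) * ((1 + γ - Emean Λ)/(1/κ + γ*β))^2
        + (κ/2) * (1 - κ*γ*β) * Vvar Λ := by
  have hκ0 : κ ≠ 0 := ne_of_gt hκ
  have hc : (0:ℝ) < 1/κ + γ*β := by positivity
  have hae : ∀ᵐ ω ∂Λ, ω ∈ Set.Icc ωl ωh := by
    rw [MeasureTheory.ae_iff]; exact hsupp
  have hig : ∀ f : ℝ → ℝ, Continuous f → Integrable f Λ := by
    intro f hf
    obtain ⟨C, hC⟩ := (isCompact_Icc : IsCompact (Set.Icc ωl ωh)).exists_bound_of_continuousOn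
      hf.continuousOn
    exact (integrable_const C).mono' hf.aestronglyMeasurable (hae.mono fun ω hω => hC ω hω)
  have hint_id : Integrable (fun ω : ℝ => ω) Λ := hig _ continuous_id
  have hE1 : ωl ≤ Emean Λ := by
    have h1 : (ωl : ℝ) = ∫ _, ωl ∂Λ := by simp
    rw [Emean, h1]
    exact integral_mono_ae (integrable_const ωl) hint_id (hae.mono fun ω hω => hω.1)
  have hE2 : Emean Λ ≤ ωh := by
    have h1 : (ωh : ℝ) = ∫ _, ωh ∂Λ := by simp
    rw [Emean, h1]
    exact integral_mono_ae hint_id (integrable_const ωh) (hae.mono fun ω hω => hω.2)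
  set E := Emean Λ with hEdef
  have hEi : ∫ ω, ω ∂Λ = E := rfl
  have hint0 : ∫ ω, (ω - E) ∂Λ = 0 := by
    rw [integral_sub hint_id (integrable_const _), integral_const, hEi]
    simp
  have hI1 : Integrable (fun ω => ω - E) Λ := hint_id.sub (integrable_const E)
  have hI2 : Integrable (fun ω => (ω - E)^2) Λ :=
    hig _ ((continuous_id.sub continuous_const).pow 2)
  set c := 1/κ + γ*β with hcdef
  set Q := (1+γ-E)/c with hQdef
  set αs := Q/κ - 1 + E with hαsdef
  set M := min κ q with hMdef
  set s := κ*γ*β with hsdef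
  have hV : Vvar Λ = ∫ ω, (ω - E)^2 ∂Λ := rfl
  clear_value E c Q αs M s
  have hs : 0 ≤ s := by rw [hsdef]; positivity
  have hM : 0 < M := by rw [hMdef]; exact lt_min hκ hq0
  have hQc : c*Q = 1+γ-E := by rw [hQdef]; field_simp
  have hck : c*κ = 1+s := by rw [hcdef, hsdef]; field_simp
  -- Part 1
  have part1 : 0 ≤ αs := by
    have h1 : (1+γ-ωh)/c ≤ Q := by
      rw [hQdef]
      gcongr
    have h3 : κ*(1-E) ≤ Q := by
      have h2 : κ*(1-E) ≤ κ*(1-ωl) := mul_le_mul_of_nonneg_left (by linarith) hκ.le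
      linarith [hreg2]
    have h4 : Q/κ - 1 + E = (Q - κ*(1-E))/κ := by field_simp; ring
    rw [hαsdef, h4]
    exact div_nonneg (by linarith) hκ.le
  have hQub : Q ≤ (1+γ-ωl)/c := by
    rw [hQdef]
    gcongr
  -- at αs the min resolves to the linear branch
  have hlin : ∀ ω : ℝ, κ*(1+αs-ω) = Q + κ*(E-ω) := by
    intro ω; rw [hαsdef]; field_simp; ring
  have hxmin : ∀ ω ∈ Set.Icc ωl ωh, min (κ*(1+αs-ω)) M = κ*(1+αs-ω) := by
    intro ω hω
    apply min_eq_left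
    have h2 : κ*(E-ω) ≤ κ*(ωh-ωl) :=
      mul_le_mul_of_nonneg_left (by linarith [hω.1]) hκ.le
    rw [hlin ω]
    linarith [hreg1, hQub]
  -- Part 3 : the value at αs
  have part3 : UP q κ γ β Λ αs
      = q * E + (1+γ-E)*Q - 1/2*c*Q^2 + κ/2*(1-s)*Vvar Λ := by
    have hpt : ∀ ω ∈ Set.Icc ωl ωh, U q κ γ β (min (κ*(1+αs-ω)) M) ω
        = (q*E + (1+γ-E)*Q - 1/2*c*Q^2)
          + ((q-Q)*(ω-E) + (κ/2*(1-s))*(ω-E)^2) := by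
      intro ω hω
      rw [hxmin ω hω, hlin ω]
      simp only [U]
      rw [← hcdef]
      linear_combination (κ*(ω-E))*hQc - (κ/2)*(ω-E)^2*hck
    have h2 : UP q κ γ β Λ αs
        = ∫ ω, ((q*E + (1+γ-E)*Q - 1/2*c*Q^2)
          + ((q-Q)*(ω-E) + (κ/2*(1-s))*(ω-E)^2)) ∂Λ := by
      rw [UP, ← hMdef]
      exact integral_congr_ae (hae.mono fun ω hω => hpt ω hω)
    have hIadd : Integrable (fun ω => (q-Q)*(ω-E) + (κ/2*(1-s))*(ω-E)^2) Λ :=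
      (hI1.const_mul _).add (hI2.const_mul _)
    rw [h2, integral_add (integrable_const _) hIadd,
      integral_add (hI1.const_mul _) (hI2.const_mul _),
      integral_const_mul, integral_const_mul, hint0, integral_const, ← hV]
    simp [measure_univ]
  -- Part 2 : maximality
  have part2 : ∀ α : ℝ, 0 ≤ α → UP q κ γ β Λ α ≤ UP q κ γ β Λ αs := by
    intro α hα
    set t := κ*(α - αs) with htdef
    set D := fun ω : ℝ => min (κ*(1+α-ω)) M - κ*(1+αs-ω) with hDdef
    have hDcont : Continuous D := by
      rw [hDdef]
      exact ((continuous_const.mul (continuous_const.sub continuous_id)).min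
        continuous_const).sub (continuous_const.mul (continuous_const.sub continuous_id))
    have hDm : ∀ ω : ℝ, D ω = min t (M - Q - κ*(E-ω)) := by
      intro ω
      rw [hDdef]
      simp only []
      rw [← min_sub_sub_right]
      congr 1
      · rw [htdef]; ring
      · rw [hlin ω]; ring
    clear_value t D
    have hUexp : ∀ (X ω : ℝ),
        U q κ γ β X ω = U q κ γ β (κ*(1+αs-ω)) ω
          + s*(ω-E)*(X - κ*(1+αs-ω)) - c/2*(X - κ*(1+αs-ω))^2 := by
      intro X ω
      rw [hlin ω]
      simp only [U]
      rw [← hcdef]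
      linear_combination (-(X-(Q + κ*(E-ω))))*hQc - (X-(Q + κ*(E-ω)))*((E-ω))*hck
    have hminc : Continuous (fun ω : ℝ => min (κ*(1+αs-ω)) M) :=
      (continuous_const.mul (continuous_const.sub continuous_id)).min continuous_const
    have hcontUαs : Continuous (fun ω => U q κ γ β (min (κ*(1+αs-ω)) M) ω) := by
      simp only [U]
      exact ((continuous_const.mul continuous_id).add
        ((continuous_const.sub continuous_id).mul hminc)).sub
        (continuous_const.mul (hminc.pow 2))
    have hcontrem : Continuous (fun ω => s*(ω-E)*D ω - c/2*(D ω)^2) :=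
      ((continuous_const.mul (continuous_id.sub continuous_const)).mul hDcont).sub
        (continuous_const.mul (hDcont.pow 2))
    have hUPexp : UP q κ γ β Λ α = UP q κ γ β Λ αs
        + ∫ ω, (s*(ω-E)*D ω - c/2*(D ω)^2) ∂Λ := by
      rw [UP, UP, ← hMdef, ← integral_add (hig _ hcontUαs) (hig _ hcontrem)]
      apply integral_congr_ae
      apply hae.mono
      intro ω hω
      have h1 := hUexp (min (κ*(1+α-ω)) M) ω
      have hDω : D ω = min (κ*(1+α-ω)) M - κ*(1+αs-ω) := by rw [hDdef]
      show U q κ γ β (min (κ*(1+α-ω)) M) ω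
        = U q κ γ β (min (κ*(1+αs-ω)) M) ω + (s*(ω-E)*D ω - c/2*(D ω)^2)
      rw [hxmin ω hω, hDω]
      linarith [h1]
    suffices hrem : ∫ ω, (s*(ω-E)*D ω - c/2*(D ω)^2) ∂Λ ≤ 0 by
      rw [hUPexp]; linarith
    have hml0 : 0 < M - Q - κ*(E-ωl) := by
      have h2 : κ*(E-ωl) ≤ κ*(ωh-ωl) := mul_le_mul_of_nonneg_left (by linarith) hκ.le
      linarith [hreg1, hQub]
    rcases le_or_gt t (M - Q - κ*(E-ωl)) with hcase | hcase
    · -- t small : D is a.e. the constant t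
      have hDt : ∀ᵐ ω ∂Λ, s*(ω-E)*D ω - c/2*(D ω)^2 = s*t*(ω-E) - c/2*t^2 := by
        apply hae.mono
        intro ω hω
        have h1 : D ω = t := by
          rw [hDm ω]
          apply min_eq_left
          have h2 : κ*(E-ω) ≤ κ*(E-ωl) := mul_le_mul_of_nonneg_left (by linarith [hω.1]) hκ.le
          linarith [hcase]
        rw [h1]; ring
      have hIa : Integrable (fun ω => s*t*(ω-E)) Λ := hI1.const_mul _
      rw [integral_congr_ae hDt, integral_sub hIa (integrable_const (c/2*t^2)),
        integral_const_mul, hint0, integral_const]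
      simp [measure_univ]
      have h3 : (0:ℝ) ≤ c*t^2 := mul_nonneg hc.le (sq_nonneg t)
      linarith
    · rcases eq_or_lt_of_le hE1 with hEl | hEl
      · -- degenerate : E = ωl, so Λ is a point mass at ωl = E
        have hnn : 0 ≤ᵐ[Λ] (fun ω => ω - ωl) := hae.mono fun ω hω => by
          simp only [Pi.zero_apply]
          linarith [hω.1]
        have hintz : ∫ ω, (ω - ωl) ∂Λ = 0 := by
          rw [integral_sub hint_id (integrable_const _), integral_const, hEi]
          simp [← hEl]
        have hz := (integral_eq_zero_iff_of_nonneg_ae hnn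
          (hint_id.sub (integrable_const _))).mp hintz
        apply integral_nonpos_of_ae
        apply hz.mono
        intro ω hω
        have hω' : ω - ωl = 0 := hω
        have hωE : ω = E := by rw [← hEl]; linarith
        show s*(ω-E)*D ω - c/2*(D ω)^2 ≤ 0
        rw [hωE]
        have h3 : (0:ℝ) ≤ c*(D E)^2 := mul_nonneg hc.le (sq_nonneg (D E))
        nlinarith [h3]
      · -- main case : ωl < E, apply the key pointwise inequality
        have hx0 : 0 < κ*(E-ωl) := mul_pos hκ (by linarith)
        have hy0 : 0 ≤ κ*(ωh-E) := mul_nonneg hκ.le (by linarith)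
        have hr1 : (1+γ-ωl) + c*κ*(ωh-ωl) ≤ c*M := by
          have h' := mul_le_mul_of_nonneg_left hreg1.le hc.le
          rw [mul_add, ← mul_assoc] at h'
          have h'' : c*((1+γ-ωl)/c) = 1+γ-ωl := by field_simp
          rw [h''] at h'
          exact h'
        have hQcκ : c*κ*Q = κ*(1+γ-E) := by linear_combination κ*hQc
        have hcon : κ*(E-ωl) + (1+s)*(κ*(ωh-E)) ≤ (1+s)*(M - Q - κ*(E-ωl)) := by
          rw [← hck]
          linarith [mul_le_mul_of_nonneg_left hr1 hκ.le, hQcκ]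
        have haept : ∀ᵐ ω ∂Λ, (2*κ*(κ*(E-ωl)))*(s*(ω-E)*D ω - c/2*(D ω)^2)
            ≤ ((2*s*(M-Q-κ*(E-ωl))*(κ*(E-ωl))+(1+s)*(M-Q-κ*(E-ωl))^2)*κ)*(ω-E) := by
          apply hae.mono
          intro ω hω
          have hm1' : κ*(E-ω) ≤ κ*(E-ωl) :=
            mul_le_mul_of_nonneg_left (by linarith [hω.1]) hκ.le
          have hm1 : M - Q - κ*(E-ωl) ≤ M - Q - κ*(E-ω) := by linarith
          have hm2' : κ*(E-ω) ≥ κ*(E-ωh) :=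
            mul_le_mul_of_nonneg_left (by linarith [hω.2]) hκ.le
          have hm2 : M - Q - κ*(E-ω)
              ≤ (M - Q - κ*(E-ωl)) + κ*(E-ωl) + κ*(ωh-E) := by
            have : κ*(E-ωh) + κ*(ωh-E) = 0 := by ring
            linarith
          have hk := keyA s (M - Q - κ*(E-ωl)) (κ*(E-ωl)) (κ*(ωh-E)) t (M - Q - κ*(E-ω))
            hs hml0 hx0.le hy0 hcon hcase.le hm1 hm2
          rw [hDm ω]
          calc (2*κ*(κ*(E-ωl)))*(s*(ω-E)*(min t (M - Q - κ*(E-ω)))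
                - c/2*(min t (M - Q - κ*(E-ω)))^2)
              = (κ*(E-ωl))*(2*s*((M - Q - κ*(E-ω))-((M - Q - κ*(E-ωl))+κ*(E-ωl)))*(min t (M - Q - κ*(E-ω)))
                - (1+s)*(min t (M - Q - κ*(E-ω)))^2) := by
                linear_combination (-(κ*(E-ωl))*(min t (M - Q - κ*(E-ω)))^2)*hck
            _ ≤ (2*s*(M-Q-κ*(E-ωl))*(κ*(E-ωl))+(1+s)*(M-Q-κ*(E-ωl))^2)
                *((M - Q - κ*(E-ω))-((M - Q - κ*(E-ωl))+κ*(E-ωl))) := hk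
            _ = ((2*s*(M-Q-κ*(E-ωl))*(κ*(E-ωl))+(1+s)*(M-Q-κ*(E-ωl))^2)*κ)*(ω-E) := by
                ring
        have hII : Integrable (fun ω => s*(ω-E)*D ω - c/2*(D ω)^2) Λ := hig _ hcontrem
        have hmono := integral_mono_ae (hII.const_mul _) (hI1.const_mul _) haept
        rw [integral_const_mul, integral_const_mul, hint0, mul_zero] at hmono
        have hpos : 0 < 2*κ*(κ*(E-ωl)) := by positivity
        have h0 : (2*κ*(κ*(E-ωl))) * ∫ ω, (s*(ω-E)*D ω - c/2*(D ω)^2) ∂Λ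
            ≤ (2*κ*(κ*(E-ωl))) * 0 := by rw [mul_zero]; exact hmono
        exact le_of_mul_le_mul_left h0 hpos
  refine ⟨part1, part2, ?_⟩
  rw [part3]
end

section
/- The comparative advantage of priorities over quotas satisfies Δ := V_P − V_Q = (κ/2)·(1 − κγβ)·Var[ω], where V_P is the supremum over α ≥ 0 of ∫ U(min{κ(1+α−ω), min{κ,q}}, ω) dΛ(ω) and V_Q is the supremum over Q ∈ [0, min{κ,q}] of ∫ U(min{max{Q, κ(1−ω)}, min{κ,q}}, ω) dΛ(ω). -/
open Set MeasureTheory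

set_option maxHeartbeats 1000000

/-- Optimal priority value `V_P = sup_{α ≥ 0} U_P(α)`. -/
noncomputable def VP (q κ γ β : ℝ) (Λ : Measure ℝ) : ℝ :=
  sSup (UP q κ γ β Λ '' Set.Ici (0:ℝ))

/-- Optimal quota value `V_Q = sup_{Q ∈ [0,min{κ,q}]} U_Q(Q)`. -/
noncomputable def VQ (q κ γ β : ℝ) (Λ : Measure ℝ) : ℝ :=
  sSup (UQ q κ γ β Λ '' Set.Icc (0:ℝ) (min κ q))

private lemma aux_integrable {ωl ωh : ℝ} (Λ : Measure ℝ) [IsProbabilityMeasure Λ]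
    (hsupp : Λ (Set.Icc ωl ωh)ᶜ = 0) {f : ℝ → ℝ} (hf : Continuous f) :
    Integrable f Λ := by
  have hae : ∀ᵐ ω ∂Λ, ω ∈ Set.Icc ωl ωh := by
    rw [MeasureTheory.ae_iff]; exact hsupp
  obtain ⟨C, hC⟩ := isCompact_Icc.exists_bound_of_continuousOn (s := Set.Icc ωl ωh) hf.continuousOn
  refine (integrable_const C).mono' hf.aestronglyMeasurable ?_
  filter_upwards [hae] with ω hω
  exact hC ω hω

/-- The comparative advantage of priorities over quotas:
`Δ = V_P − V_Q = (κ/2)(1 − κγβ)·Var[ω]`. -/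
theorem stmt_5 (q κ γ β ωl ωh : ℝ)
    (hq0 : 0 < q) (hq1 : q ≤ 1) (hκ : 0 < κ) (hγ : 0 ≤ γ) (hβ : 0 ≤ β)
    (hωl : 0 ≤ ωl) (hωlt : ωl < ωh) (hωh : ωh ≤ 1)
    (hreg1 : (1 + γ - ωl)/(1/κ + γ*β) + κ*(ωh - ωl) < min κ q)
    (hreg2 : κ*(1 - ωl) < (1 + γ - ωh)/(1/κ + γ*β))
    (Λ : Measure ℝ) [IsProbabilityMeasure Λ] (hsupp : Λ (Set.Icc ωl ωh)ᶜ = 0) :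
    VP q κ γ β Λ - VQ q κ γ β Λ = (κ/2) * (1 - κ*γ*β) * Vvar Λ := by
  have hκ' : κ ≠ 0 := hκ.ne'
  set c : ℝ := 1/κ + γ*β with hc_def
  clear_value c
  have hc : 0 < c := by rw [hc_def]; positivity
  have hc' : c ≠ 0 := hc.ne'
  have hae : ∀ᵐ ω ∂Λ, ω ∈ Set.Icc ωl ωh := by
    rw [MeasureTheory.ae_iff]; exact hsupp
  have hint : ∀ {f : ℝ → ℝ}, Continuous f → Integrable f Λ :=
    fun hf => aux_integrable Λ hsupp hf
  set m : ℝ := Emean Λ with hm_def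
  clear_value m
  set V : ℝ := Vvar Λ with hV_def
  clear_value V
  have hint_id : Integrable (fun ω => ω) Λ := hint continuous_id
  -- mean bounds
  have hml : ωl ≤ m := by
    rw [hm_def, Emean]
    have h1 : ∫ (_ : ℝ), ωl ∂Λ ≤ ∫ ω, ω ∂Λ := by
      refine integral_mono_ae (integrable_const _) hint_id ?_
      filter_upwards [hae] with ω hω; exact hω.1
    simpa [integral_const, measure_univ] using h1
  have hmh : m ≤ ωh := by
    rw [hm_def, Emean]
    have h1 : ∫ ω, ω ∂Λ ≤ ∫ (_ : ℝ), ωh ∂Λ := by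
      refine integral_mono_ae hint_id (integrable_const _) ?_
      filter_upwards [hae] with ω hω; exact hω.2
    simpa [integral_const, measure_univ] using h1
  set cap : ℝ := min κ q with hcap_def
  clear_value cap
  set A : ℝ := (1+γ-m)/c with hA_def
  clear_value A
  -- basic bounds on A
  have hA_lb : κ*(1-ωl) < A := by
    have h1 : (1+γ-ωh)/c ≤ (1+γ-m)/c := by gcongr <;> linarith
    linarith
  have hA_ub : A ≤ (1+γ-ωl)/c := by
    rw [hA_def]; gcongr <;> linarith
  have hA_pos : 0 < A := lt_of_le_of_lt (by nlinarith) hA_lb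
  have hA_cap : A < cap := by nlinarith
  set s : ℝ → ℝ := fun ω => (1+γ-ω)/c with hs_def
  clear_value s
  -- completed square form of U
  have hUsq : ∀ x ω : ℝ, U q κ γ β x ω
      = (q*ω + (1+γ-ω)^2/(2*c)) - (c/2)*(x - s ω)^2 := by
    intro x ω
    show q * ω + (1 + γ - ω) * x - (1/2) * (1/κ + γ*β) * x^2 = _
    rw [← hc_def, hs_def]
    field_simp
    ring
  have hUcont : ∀ {g : ℝ → ℝ}, Continuous g →
      Continuous (fun ω => U q κ γ β (g ω) ω) := by
    intro g hg
    unfold U; fun_prop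
  set W : ℝ := ∫ ω, (q*ω + (1+γ-ω)^2/(2*c)) ∂Λ with hW_def
  clear_value W
  have hval : ∀ g : ℝ → ℝ, Continuous g →
      ∫ ω, U q κ γ β (g ω) ω ∂Λ = W - (c/2) * ∫ ω, (g ω - s ω)^2 ∂Λ := by
    intro g hg
    have h1 : (fun ω => U q κ γ β (g ω) ω)
        = fun ω => (q*ω + (1+γ-ω)^2/(2*c)) - (c/2)*((g ω - s ω)^2) := by
      funext ω; rw [hUsq]
    rw [h1, integral_sub (hint (by fun_prop)) (hint (by rw [hs_def]; fun_prop)),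
      integral_const_mul, hW_def]
  -- key second-moment computation
  have hts : ∫ ω, (ω - m) ∂Λ = 0 := by
    rw [integral_sub hint_id (integrable_const _), integral_const]
    simp [measure_univ, hm_def, Emean]
  have hkey : ∀ a b : ℝ, ∫ ω, (a + b*(ω - m))^2 ∂Λ = a^2 + b^2 * V := by
    intro a b
    have h1 : (fun ω : ℝ => (a + b*(ω - m))^2)
        = fun ω => (a^2 + (2*a*b)*(ω-m)) + b^2*(ω-m)^2 := by
      funext ω; ring
    rw [h1, integral_add (by exact (integrable_const _).add ((hint (by fun_prop)).const_mul _))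
        (by exact (hint (by fun_prop)).const_mul _),
      integral_add (integrable_const _) ((hint (by fun_prop)).const_mul _),
      integral_const_mul, integral_const_mul, hts, integral_const]
    have h2 : ∫ ω, (ω - m)^2 ∂Λ = V := by rw [hV_def, Vvar, ← hm_def]
    rw [h2]
    simp [measure_univ]
  -- monotone comparison of U around the peak s ω
  have hUle : ∀ x y ω : ℝ, ((s ω ≤ y ∧ y ≤ x) ∨ (x ≤ y ∧ y ≤ s ω)) →
      U q κ γ β x ω ≤ U q κ γ β y ω := by
    intro x y ω h
    rw [hUsq x ω, hUsq y ω]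
    have h2 : (y - s ω)^2 ≤ (x - s ω)^2 := by
      rcases h with ⟨h1, h2⟩ | ⟨h1, h2⟩ <;> nlinarith
    have h3 := mul_le_mul_of_nonneg_left h2 (by positivity : (0:ℝ) ≤ c/2)
    linarith
  set αstar : ℝ := A/κ - 1 + m with hαstar_def
  clear_value αstar
  have hαstar_lin : ∀ ω : ℝ, κ*(1+αstar-ω) = A + κ*(m-ω) := by
    intro ω; rw [hαstar_def]; field_simp; ring
  have hαstar_pos : 0 ≤ αstar := by
    rw [hαstar_def]
    have : 1 - ωl < A/κ := by rw [lt_div_iff₀ hκ]; nlinarith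
    linarith
  -- the priority value at αstar
  have hscap : ∀ ω ∈ Set.Icc ωl ωh, κ*(1+αstar-ω) ≤ cap := by
    intro ω hω
    rw [hαstar_lin]
    have h1 : κ*(m-ω) ≤ κ*(ωh-ωl) :=
      mul_le_mul_of_nonneg_left (by linarith [hω.1, hω.2]) hκ.le
    linarith
  have hP1 : UP q κ γ β Λ αstar = W - (c/2) * ((1/c-κ)^2 * V) := by
    have e1 : UP q κ γ β Λ αstar = ∫ ω, U q κ γ β (κ*(1+αstar-ω)) ω ∂Λ := by
      unfold UP
      refine integral_congr_ae ?_
      filter_upwards [hae] with ω hω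
      rw [← hcap_def, min_eq_left (hscap ω hω)]
    rw [e1, hval _ (by fun_prop)]
    have e2 : (fun ω => (κ*(1+αstar-ω) - s ω)^2)
        = fun ω => ((0:ℝ) + (1/c-κ)*(ω - m))^2 := by
      funext ω
      simp only [hαstar_lin, hs_def, hA_def]
      field_simp
      try ring
    rw [e2, hkey]
    ring
  -- the priority upper bound
  set αhat : ℝ := cap/κ - 1 + ωl with hαhat_def
  clear_value αhat
  have hαhat_lin : ∀ ω : ℝ, κ*(1+αhat-ω) = cap + κ*(ωl-ω) := by
    intro ω; rw [hαhat_def]; field_simp; ring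
  have hP2 : ∀ α : ℝ, 0 ≤ α → UP q κ γ β Λ α ≤ UP q κ γ β Λ αstar := by
    intro α hα
    set α' : ℝ := min α αhat with hα'_def
    have step1 : UP q κ γ β Λ α ≤ ∫ ω, U q κ γ β (κ*(1+α'-ω)) ω ∂Λ := by
      unfold UP
      refine integral_mono_ae (hint (hUcont (by fun_prop))) (hint (hUcont (by fun_prop))) ?_
      filter_upwards [hae] with ω hω
      rw [← hcap_def]
      rcases le_total α αhat with h | h
      · rw [hα'_def, min_eq_left h, min_eq_left]
        have := hαhat_lin ω
        nlinarith [hω.1, hω.2]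
      · rw [hα'_def, min_eq_right h]
        refine hUle _ _ _ (Or.inl ⟨?_, ?_⟩)
        · -- s ω ≤ κ*(1+αhat-ω)
          rw [hαhat_lin, hs_def]
          have h1 : (1+γ-ω)/c ≤ (1+γ-ωl)/c := by gcongr <;> linarith [hω.1]
          nlinarith [hω.1, hω.2]
        · refine le_min ?_ ?_
          · nlinarith
          · have := hαhat_lin ω
            nlinarith [hω.1]
    have step2 : ∫ ω, U q κ γ β (κ*(1+α'-ω)) ω ∂Λ
        = W - (c/2) * ((κ*(α'-αstar))^2 + (1/c-κ)^2 * V) := by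
      rw [hval _ (by fun_prop)]
      have e2 : (fun ω => (κ*(1+α'-ω) - s ω)^2)
          = fun ω => ((κ*(α'-αstar)) + (1/c-κ)*(ω - m))^2 := by
        funext ω
        simp only [hs_def, hαstar_def, hA_def]
        field_simp
        try ring
      rw [e2, hkey]
    have h3 : (0:ℝ) ≤ (c/2) * (κ*(α'-αstar))^2 := by positivity
    rw [hP1]
    nlinarith [step1, step2]
  -- the quota value at A
  have hQ1 : UQ q κ γ β Λ A = W - (c/2) * ((1/c)^2 * V) := by
    have e1 : UQ q κ γ β Λ A = ∫ ω, U q κ γ β A ω ∂Λ := by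
      unfold UQ
      refine integral_congr_ae ?_
      filter_upwards [hae] with ω hω
      rw [← hcap_def, max_eq_left (by nlinarith [hω.1] : κ*(1-ω) ≤ A), min_eq_left hA_cap.le]
    rw [e1, hval _ continuous_const]
    have e2 : (fun ω => (A - s ω)^2) = fun ω => ((0:ℝ) + (1/c)*(ω - m))^2 := by
      funext ω
      simp only [hs_def, hA_def]
      field_simp
      try ring
    rw [e2, hkey]
    ring
  -- the quota upper bound
  have hQ2 : ∀ Q ∈ Set.Icc (0:ℝ) cap, UQ q κ γ β Λ Q ≤ UQ q κ γ β Λ A := by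
    intro Q hQ
    set Q' : ℝ := max Q (κ*(1-ωl)) with hQ'_def
    have step1 : UQ q κ γ β Λ Q ≤ ∫ ω, U q κ γ β Q' ω ∂Λ := by
      unfold UQ
      refine integral_mono_ae (hint (hUcont (by fun_prop))) (hint (hUcont continuous_const)) ?_
      filter_upwards [hae] with ω hω
      rw [← hcap_def]
      have hk1 : κ*(1-ω) ≤ κ*(1-ωl) := by nlinarith [hω.1]
      have hks : κ*(1-ωl) ≤ s ω := by
        rw [hs_def]
        have h1 : (1+γ-ωh)/c ≤ (1+γ-ω)/c := by gcongr <;> linarith [hω.2]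
        linarith
      rcases le_total Q (κ*(1-ωl)) with h | h
      · rw [hQ'_def, max_eq_right h]
        refine hUle _ _ _ (Or.inr ⟨?_, hks⟩)
        exact le_trans (min_le_left _ _) (max_le (h.trans (le_refl _)) hk1)
      · rw [hQ'_def, max_eq_left h,
          max_eq_left (hk1.trans h), min_eq_left hQ.2]
    have step2 : ∫ ω, U q κ γ β Q' ω ∂Λ
        = W - (c/2) * ((Q'-A)^2 + (1/c)^2 * V) := by
      rw [hval _ continuous_const]
      have e2 : (fun ω => (Q' - s ω)^2) = fun ω => ((Q'-A) + (1/c)*(ω - m))^2 := by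
        funext ω
        simp only [hs_def, hA_def]
        field_simp
        ring
      rw [e2, hkey]
    have h3 : (0:ℝ) ≤ (c/2) * (Q'-A)^2 := by positivity
    rw [hQ1]
    nlinarith [step1, step2]
  -- assemble
  have hVP : VP q κ γ β Λ = W - (c/2) * ((1/c-κ)^2 * V) := by
    rw [VP, ← hP1]
    refine IsGreatest.csSup_eq ⟨⟨αstar, hαstar_pos, rfl⟩, ?_⟩
    rintro y ⟨α, hα, rfl⟩
    exact hP2 α hα
  have hVQ : VQ q κ γ β Λ = W - (c/2) * ((1/c)^2 * V) := by
    rw [VQ, ← hcap_def, ← hQ1]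
    refine IsGreatest.csSup_eq ⟨⟨A, ⟨hA_pos.le, hA_cap.le⟩, rfl⟩, ?_⟩
    rintro y ⟨Q, hQ, rfl⟩
    exact hQ2 Q hQ
  rw [hVP, hVQ]
  rw [hc_def]
  field_simp
  ring
end

section
/- The loss from restricting attention to quota mechanisms satisfies V* − V_Q = (1/2)·κ·Var[ω]/(1+κγβ), where V* = ∫ max_{x ∈ [0, min{κ,q}]} U(x, ω) dΛ(ω) and V_Q is the supremum over Q ∈ [0, min{κ,q}] of ∫ U(min{max{Q, κ(1−ω)}, min{κ,q}}, ω) dΛ(ω). -/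
open Set MeasureTheory

/-- First-best value. -/
noncomputable def Vstar (q κ γ β : ℝ) (Λ : Measure ℝ) : ℝ :=
  ∫ ω, sSup ((fun x => U q κ γ β x ω) '' Set.Icc (0:ℝ) (min κ q)) ∂Λ

lemma quad_max_s6 {A : ℝ} (hA : 0 < A) (b x : ℝ) :
    b*x - (1/2)*A*x^2 ≤ b*(b/A) - (1/2)*A*(b/A)^2 := by
  have h : b*(b/A) - (1/2)*A*(b/A)^2 - (b*x - (1/2)*A*x^2) = (b - A*x)^2 / (2*A) := by
    field_simp; ring
  nlinarith [div_nonneg (sq_nonneg (b - A*x)) (by linarith : (0:ℝ) ≤ 2*A)]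

lemma quad_mono {A : ℝ} (hA : 0 < A) {b x y : ℝ} (hxy : x ≤ y) (hy : A*y ≤ b) :
    b*x - (1/2)*A*x^2 ≤ b*y - (1/2)*A*y^2 := by
  nlinarith [mul_nonneg (sub_nonneg.mpr hxy) (sub_nonneg.mpr hy),
    mul_nonneg hA.le (sq_nonneg (y - x))]

lemma integrable_of_support {Λ : Measure ℝ} [IsProbabilityMeasure Λ] {a b : ℝ}
    (h : Λ (Set.Icc a b)ᶜ = 0) {f : ℝ → ℝ} (hf : Continuous f) : Integrable f Λ := by
  obtain ⟨C, hC⟩ := (isCompact_Icc (a := a) (b := b)).exists_bound_of_continuousOn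
    hf.continuousOn
  refine ⟨hf.aestronglyMeasurable, HasFiniteIntegral.of_bounded (C := C) ?_⟩
  have hmem : ∀ᵐ ω ∂Λ, ω ∈ Set.Icc a b := by rw [ae_iff]; exact h
  filter_upwards [hmem] with ω hω
  exact hC ω hω


set_option maxHeartbeats 1000000 in
/-- The loss from restricting to quota mechanisms:
`V* − V_Q = (1/2)·κ·Var[ω]/(1+κγβ)`. -/
theorem stmt_6 (q κ γ β ωl ωh : ℝ)
    (hq0 : 0 < q) (hq1 : q ≤ 1) (hκ : 0 < κ) (hγ : 0 ≤ γ) (hβ : 0 ≤ β)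
    (hωl : 0 ≤ ωl) (hωlt : ωl < ωh) (hωh : ωh ≤ 1)
    (hreg1 : (1 + γ - ωl)/(1/κ + γ*β) + κ*(ωh - ωl) < min κ q)
    (hreg2 : κ*(1 - ωl) < (1 + γ - ωh)/(1/κ + γ*β))
    (Λ : Measure ℝ) [IsProbabilityMeasure Λ] (hsupp : Λ (Set.Icc ωl ωh)ᶜ = 0) :
    Vstar q κ γ β Λ - VQ q κ γ β Λ = (1/2) * κ * Vvar Λ / (1 + κ*γ*β) := by
  have hA : (0:ℝ) < 1/κ + γ*β := by
    have := one_div_pos.mpr hκ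
    nlinarith [mul_nonneg hγ hβ]
  set A : ℝ := 1/κ + γ*β with hAdef
  have hm : (0:ℝ) < min κ q := lt_min hκ hq0
  have hmem : ∀ᵐ ω ∂Λ, ω ∈ Set.Icc ωl ωh := by rw [ae_iff]; exact hsupp
  have hint1 : Integrable (fun ω : ℝ => ω) Λ := integrable_of_support hsupp continuous_id
  have hint2 : Integrable (fun ω : ℝ => ω^2) Λ :=
    integrable_of_support hsupp (continuous_pow 2)
  set E : ℝ := Emean Λ with hEdef
  set M2 : ℝ := ∫ ω, ω^2 ∂Λ with hM2def
  -- quadratic integral formula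
  have hquad : ∀ p r s : ℝ, ∫ ω, (p*ω^2 + r*ω + s) ∂Λ = p * M2 + r * E + s := by
    intro p r s
    have hfg : Integrable (fun ω : ℝ => p*ω^2 + r*ω) Λ :=
      (hint2.const_mul p).add (hint1.const_mul r)
    have e1 : (∫ ω, (p*ω^2 + r*ω + s) ∂Λ)
        = (∫ ω, (p*ω^2 + r*ω) ∂Λ) + ∫ _ω, s ∂Λ :=
      integral_add hfg (integrable_const s)
    have e2 : (∫ ω, (p*ω^2 + r*ω) ∂Λ)
        = (∫ ω, p*ω^2 ∂Λ) + ∫ ω, r*ω ∂Λ :=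
      integral_add (hint2.const_mul p) (hint1.const_mul r)
    rw [e1, e2, integral_const_mul, integral_const_mul, integral_const]
    simp [hM2def, hEdef, Emean]
  -- mean bounds
  have hEl : ωl ≤ E := by
    have h1 : (∫ _ω : ℝ, ωl ∂Λ) ≤ ∫ ω, ω ∂Λ := by
      apply integral_mono_ae (integrable_const _) hint1
      filter_upwards [hmem] with ω hω using hω.1
    simpa [Emean, hEdef] using h1
  have hEh : E ≤ ωh := by
    have h1 : (∫ ω, ω ∂Λ) ≤ ∫ _ω : ℝ, ωh ∂Λ := by
      apply integral_mono_ae hint1 (integrable_const _)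
      filter_upwards [hmem] with ω hω using hω.2
    simpa [Emean, hEdef] using h1
  -- basic inequalities
  have hxlm : (1 + γ - ωl)/A < min κ q := by
    have := mul_pos hκ (sub_pos.mpr hωlt); linarith
  have hxlm' : 1 + γ - ωl < (min κ q) * A := (div_lt_iff₀ hA).mp hxlm
  have hcA : κ*(1-ωl) * A < 1 + γ - ωh := (lt_div_iff₀ hA).mp hreg2
  have hc0 : 0 ≤ κ*(1-ωl) := mul_nonneg hκ.le (by linarith)
  have hcm : κ*(1-ωl) < min κ q := by
    have h2 : κ*(1-ωl)*A < (min κ q)*A := by linarith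
    exact lt_of_mul_lt_mul_right h2 hA.le
  set Qs : ℝ := (1 + γ - E)/A with hQsdef
  have hQs0 : 0 ≤ Qs := div_nonneg (by linarith) hA.le
  have hQsm : Qs ≤ min κ q := by
    rw [hQsdef, div_le_iff₀ hA]; linarith
  have hcQs : κ*(1-ωl) ≤ Qs := by
    rw [hQsdef, le_div_iff₀ hA]; linarith
  -- Vstar
  have hVstar : Vstar q κ γ β Λ =
      (1/(2*A)) * M2 + (q - (1+γ)/A) * E + (1+γ)^2/(2*A) := by
    have h1 : Vstar q κ γ β Λ =
        ∫ ω, ((1/(2*A))*ω^2 + (q - (1+γ)/A)*ω + (1+γ)^2/(2*A)) ∂Λ := by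
      apply integral_congr_ae
      filter_upwards [hmem] with ω hω
      have hb0 : 0 ≤ 1 + γ - ω := by have := hω.2; linarith
      have hxm : (1 + γ - ω)/A ≤ min κ q :=
        le_trans ((div_le_div_iff_of_pos_right hA).mpr (by linarith [hω.1])) hxlm.le
      have hgr : IsGreatest ((fun x => U q κ γ β x ω) '' Set.Icc (0:ℝ) (min κ q))
          (U q κ γ β ((1+γ-ω)/A) ω) := by
        constructor
        · exact ⟨(1+γ-ω)/A, ⟨div_nonneg hb0 hA.le, hxm⟩, rfl⟩
        · rintro y ⟨x, hx, rfl⟩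
          simp only [U, ← hAdef]
          have := quad_max_s6 hA (1+γ-ω) x
          linarith
      rw [hgr.csSup_eq]
      simp only [U, ← hAdef]
      field_simp
      ring
    rw [h1, hquad]
  -- value of quota Qs
  have hUQQs : UQ q κ γ β Λ Qs = q*E + (1+γ-E)*Qs - (1/2)*A*Qs^2 := by
    have h1 : UQ q κ γ β Λ Qs =
        ∫ ω, (0*ω^2 + (q - Qs)*ω + ((1+γ)*Qs - (1/2)*A*Qs^2)) ∂Λ := by
      apply integral_congr_ae
      filter_upwards [hmem] with ω hω
      have hk : κ*(1-ω) ≤ κ*(1-ωl) :=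
        mul_le_mul_of_nonneg_left (by linarith [hω.1]) hκ.le
      rw [max_eq_left (hk.trans hcQs), min_eq_left hQsm]
      simp only [U, ← hAdef]; ring
    rw [h1, hquad]; ring
  -- upper bound for every quota
  have hub : ∀ Q ∈ Set.Icc (0:ℝ) (min κ q),
      UQ q κ γ β Λ Q ≤ q*E + (1+γ-E)*Qs - (1/2)*A*Qs^2 := by
    rintro Q ⟨hQ0, hQm⟩
    set Q' : ℝ := max Q (κ*(1-ωl)) with hQ'def
    have hQ'm : Q' ≤ min κ q := max_le hQm hcm.le
    have hg : Continuous fun ω : ℝ => min (max Q (κ*(1-ω))) (min κ q) :=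
      (continuous_const.max (continuous_const.mul (continuous_const.sub continuous_id))).min
        continuous_const
    have hcont : Continuous fun ω : ℝ =>
        U q κ γ β (min (max Q (κ*(1-ω))) (min κ q)) ω := by
      simp only [U]
      exact ((continuous_const.mul continuous_id).add
        ((continuous_const.sub continuous_id).mul hg)).sub
        ((continuous_const.mul continuous_const).mul (hg.pow 2))
    have hcont' : Continuous fun ω : ℝ => U q κ γ β Q' ω := by
      simp only [U]
      exact ((continuous_const.mul continuous_id).add
        ((continuous_const.sub continuous_id).mul continuous_const)).sub
        ((continuous_const.mul continuous_const).mul (continuous_const.pow 2))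
    have step1 : UQ q κ γ β Λ Q ≤ ∫ ω, U q κ γ β Q' ω ∂Λ := by
      apply integral_mono_ae (integrable_of_support hsupp hcont)
        (integrable_of_support hsupp hcont')
      filter_upwards [hmem] with ω hω
      have hk : κ*(1-ω) ≤ κ*(1-ωl) :=
        mul_le_mul_of_nonneg_left (by linarith [hω.1]) hκ.le
      have hxeq : min (max Q (κ*(1-ω))) (min κ q) = max Q (κ*(1-ω)) :=
        min_eq_left (max_le hQm (hk.trans hcm.le))
      rw [hxeq]
      rcases le_total (κ*(1-ωl)) Q with h | h
      · rw [max_eq_left (hk.trans h), hQ'def, max_eq_left h]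
      · rw [hQ'def, max_eq_right h]
        have hxle : max Q (κ*(1-ω)) ≤ κ*(1-ωl) := max_le h hk
        have hAc : A * (κ*(1-ωl)) ≤ 1 + γ - ω := by
          have := hω.2; nlinarith [hcA]
        simp only [U, ← hAdef]
        have := quad_mono hA hxle hAc
        linarith
    have step2 : (∫ ω, U q κ γ β Q' ω ∂Λ) = q*E + (1+γ-E)*Q' - (1/2)*A*Q'^2 := by
      have h1 : (∫ ω, U q κ γ β Q' ω ∂Λ) =
          ∫ ω, (0*ω^2 + (q - Q')*ω + ((1+γ)*Q' - (1/2)*A*Q'^2)) ∂Λ := by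
        apply integral_congr_ae
        apply Filter.Eventually.of_forall
        intro ω
        simp only [U, ← hAdef]; ring
      rw [h1, hquad]; ring
    have step3 : q*E + (1+γ-E)*Q' - (1/2)*A*Q'^2 ≤ q*E + (1+γ-E)*Qs - (1/2)*A*Qs^2 := by
      have := quad_max_s6 hA (1+γ-E) Q'
      rw [hQsdef]; linarith
    rw [step2] at step1
    linarith
  -- VQ
  have hVQ : VQ q κ γ β Λ = q*E + (1+γ-E)*Qs - (1/2)*A*Qs^2 := by
    have hgr : IsGreatest (UQ q κ γ β Λ '' Set.Icc (0:ℝ) (min κ q)) (UQ q κ γ β Λ Qs) := by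
      constructor
      · exact ⟨Qs, ⟨hQs0, hQsm⟩, rfl⟩
      · rintro y ⟨Q, hQ, rfl⟩
        rw [hUQQs]; exact hub Q hQ
    rw [VQ, hgr.csSup_eq, hUQQs]
  -- variance
  have hVvar : Vvar Λ = M2 - E^2 := by
    have h1 : (∫ ω, (ω - Emean Λ)^2 ∂Λ) = ∫ ω, (1*ω^2 + (-2*E)*ω + E^2) ∂Λ := by
      apply integral_congr_ae
      apply Filter.Eventually.of_forall
      intro ω
      rw [← hEdef]; ring
    rw [Vvar, h1, hquad]; ring
  -- conclude
  rw [hVstar, hVQ, hVvar, hQsdef, hAdef]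
  have hκ' : κ ≠ 0 := hκ.ne'
  have h1 : (0:ℝ) < 1 + κ*γ*β := by nlinarith [mul_nonneg (mul_nonneg hκ.le hγ) hβ]
  have h1' : (1:ℝ) + κ*γ*β ≠ 0 := h1.ne'
  have hAne : (1:ℝ)/κ + γ*β ≠ 0 := by
    have : (0:ℝ) < 1/κ + γ*β := by
      have := one_div_pos.mpr hκ; nlinarith [mul_nonneg hγ hβ]
    exact this.ne'
  field_simp
  ring
end

section
/- The loss from restricting attention to priority mechanisms satisfies V* − V_P = (1/2)·(κγβ)²·κ·Var[ω]/(1+κγβ), where V* = ∫ max_{x ∈ [0, min{κ,q}]} U(x, ω) dΛ(ω) and V_P is the supremum over α ≥ 0 of ∫ U(min{κ(1+α−ω), min{κ,q}}, ω) dΛ(ω). -/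
open Set MeasureTheory

lemma U_key (q κ γ β x ω : ℝ) (hκ : κ ≠ 0) (hc : 1/κ + γ*β ≠ 0) :
    U q κ γ β x ω = (q*ω + (1+γ-ω)^2/(2*(1/κ + γ*β)))
      - ((1/κ + γ*β)/2) * (x - (1+γ-ω)/(1/κ + γ*β))^2 := by
  have hC : 1/κ + γ*β = (1+γ*κ*β)/κ := by field_simp
  have h2 : 1+γ*κ*β ≠ 0 := fun h => hc (by rw [hC, h, zero_div])
  simp only [U]; rw [hC]; field_simp; ring

lemma integ_help {Λ : Measure ℝ} [IsProbabilityMeasure Λ] {ωl ωh : ℝ}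
    (hae : ∀ᵐ ω ∂Λ, ω ∈ Set.Icc ωl ωh) {f : ℝ → ℝ} (hf : Continuous f) (C : ℝ)
    (hb : ∀ ω ∈ Set.Icc ωl ωh, |f ω| ≤ C) : Integrable f Λ :=
  (integrable_const C).mono' hf.aestronglyMeasurable
    (hae.mono (by intro ω h; rw [Real.norm_eq_abs]; exact hb ω h))

lemma U_abs_bound (q κ γ β x ω X : ℝ) (hq : 0 < q) (hγ : 0 ≤ γ) (hc : 0 < 1/κ + γ*β)
    (hx0 : 0 ≤ x) (hxX : x ≤ X) (hω0 : 0 ≤ ω) (hω1 : ω ≤ 1) :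
    |U q κ γ β x ω| ≤ q + (1+γ)*X + ((1/κ + γ*β)/2)*X^2 := by
  have hX0 : 0 ≤ X := le_trans hx0 hxX
  have h1 : 0 ≤ q*ω := mul_nonneg hq.le hω0
  have h2 : 0 ≤ (1+γ-ω)*x := mul_nonneg (by linarith) hx0
  have h3 : x^2 ≤ X^2 := by nlinarith
  have h4 : (1/κ+γ*β)/2 * x^2 ≤ (1/κ+γ*β)/2 * X^2 :=
    mul_le_mul_of_nonneg_left h3 (by linarith)
  have h5 : 0 ≤ (1+γ)*X := mul_nonneg (by linarith) hX0
  have h6 : q*ω ≤ q := by nlinarith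
  have h7 : (1+γ-ω)*x ≤ (1+γ)*X := mul_le_mul (by linarith) hxX hx0 (by linarith)
  have h8 : 0 ≤ (1/κ+γ*β)/2*x^2 := mul_nonneg (by linarith) (sq_nonneg x)
  simp only [U]
  rw [abs_le]
  constructor
  · nlinarith
  · nlinarith

set_option maxHeartbeats 2000000 in
/-- The loss from restricting to priority mechanisms:
`V* − V_P = (1/2)·(κγβ)²·κ·Var[ω]/(1+κγβ)`. -/
theorem stmt_7 (q κ γ β ωl ωh : ℝ)
    (hq0 : 0 < q) (hq1 : q ≤ 1) (hκ : 0 < κ) (hγ : 0 ≤ γ) (hβ : 0 ≤ β)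
    (hωl : 0 ≤ ωl) (hωlt : ωl < ωh) (hωh : ωh ≤ 1)
    (hreg1 : (1 + γ - ωl)/(1/κ + γ*β) + κ*(ωh - ωl) < min κ q)
    (hreg2 : κ*(1 - ωl) < (1 + γ - ωh)/(1/κ + γ*β))
    (Λ : Measure ℝ) [IsProbabilityMeasure Λ] (hsupp : Λ (Set.Icc ωl ωh)ᶜ = 0) :
    Vstar q κ γ β Λ - VP q κ γ β Λ
      = (1/2) * (κ*γ*β)^2 * κ * Vvar Λ / (1 + κ*γ*β) := by
  have hκ' : κ ≠ 0 := ne_of_gt hκ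
  have hc0 : 0 < 1/κ + γ*β := add_pos_of_pos_of_nonneg (one_div_pos.mpr hκ) (mul_nonneg hγ hβ)
  have hc' : (1/κ + γ*β) ≠ 0 := ne_of_gt hc0
  have hcκ : (1/κ + γ*β)*κ = 1 + κ*γ*β := by field_simp
  have hcκ0 : 0 < (1/κ + γ*β)*κ := mul_pos hc0 hκ
  have hκγβ : 0 ≤ κ*γ*β := mul_nonneg (mul_nonneg hκ.le hγ) hβ
  have hcκ1 : 1 ≤ (1/κ + γ*β)*κ := by rw [hcκ]; linarith
  have hm0 : 0 < min κ q := lt_min hκ hq0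
  have hae : ∀ᵐ ω ∂Λ, ω ∈ Icc ωl ωh := by
    have : {ω | ¬ ω ∈ Icc ωl ωh} = (Icc ωl ωh)ᶜ := rfl
    rw [MeasureTheory.ae_iff, this]
    exact hsupp
  have hIid : Integrable (fun ω => ω) Λ :=
    integ_help hae continuous_id 1
      (fun ω h => abs_le.mpr ⟨by linarith [h.1], by linarith [h.2]⟩)
  obtain ⟨E, hE⟩ : ∃ E, E = Emean Λ := ⟨_, rfl⟩
  have hEint : (∫ ω, ω ∂Λ) = E := hE.symm
  have hEl : ωl ≤ E := by
    have h1 : ∫ _, (ωl:ℝ) ∂Λ ≤ ∫ ω, ω ∂Λ :=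
      integral_mono_ae (integrable_const _) hIid (hae.mono fun ω h => h.1)
    simp only [integral_const, measure_univ, ENNReal.toReal_one, probReal_univ, one_smul] at h1
    linarith [hEint ▸ h1]
  have hEh : E ≤ ωh := by
    have h1 : ∫ ω, ω ∂Λ ≤ ∫ _, (ωh:ℝ) ∂Λ :=
      integral_mono_ae hIid (integrable_const _) (hae.mono fun ω h => h.2)
    simp only [integral_const, measure_univ, ENNReal.toReal_one, probReal_univ, one_smul] at h1
    linarith [hEint ▸ h1]
  obtain ⟨A, hA⟩ : ∃ A, A = E - 1 + (1+γ-E)/((1/κ + γ*β)*κ) := ⟨_, rfl⟩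
  obtain ⟨B, hB⟩ : ∃ B, B = ωh - 1 + (1+γ-ωh)/((1/κ + γ*β)*κ) := ⟨_, rfl⟩
  obtain ⟨K, hK⟩ : ∃ K, K = κ - 1/(1/κ + γ*β) := ⟨_, rfl⟩
  have hK0 : 0 ≤ K := by
    rw [hK, sub_nonneg, div_le_iff₀ hc0]
    nlinarith
  have hA0 : 0 ≤ A := by
    have h2 : κ*(1-ωl)*(1/κ + γ*β) < 1+γ-ωh := (lt_div_iff₀ hc0).mp hreg2
    have h3 : (1-E) * ((1/κ + γ*β)*κ) ≤ 1+γ-E := by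
      nlinarith [mul_le_mul_of_nonneg_right (show (1:ℝ)-E ≤ 1-ωl by linarith) hcκ0.le]
    have h4 := (le_div_iff₀ hcκ0).mpr h3
    rw [hA]; linarith
  have hBA : A ≤ B := by
    have hid : B - A = (ωh - E) * (1 - 1/((1/κ + γ*β)*κ)) := by
      rw [hA, hB]; field_simp; ring
    have h5 : 1/((1/κ + γ*β)*κ) ≤ 1 := by rw [div_le_one hcκ0]; exact hcκ1
    nlinarith [hid, mul_nonneg (show (0:ℝ) ≤ ωh - E by linarith)
      (show (0:ℝ) ≤ 1 - 1/((1/κ + γ*β)*κ) by linarith)]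
  have hB0 : 0 ≤ B := le_trans hA0 hBA
  have hbind : ∀ ω ∈ Icc ωl ωh, ∀ a, a ≤ B → κ*(1+a-ω) ≤ min κ q := by
    intro ω hω a ha
    have h6 : κ*(1+B-ωl) = κ*(ωh-ωl) + (1+γ-ωh)/(1/κ + γ*β) := by
      rw [hB]; field_simp; ring
    have h7 : (1+γ-ωh)/(1/κ + γ*β) ≤ (1+γ-ωl)/(1/κ + γ*β) :=
      (div_le_div_iff_of_pos_right hc0).mpr (by linarith)
    have h8 : κ*(1+a-ω) ≤ κ*(1+B-ωl) :=
      mul_le_mul_of_nonneg_left (by linarith [hω.1]) hκ.le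
    linarith
  have hxs0 : ∀ ω ∈ Icc ωl ωh, 0 ≤ (1+γ-ω)/(1/κ + γ*β) := fun ω hω =>
    div_nonneg (by linarith [hω.2]) hc0.le
  have hxsm : ∀ ω ∈ Icc ωl ωh, (1+γ-ω)/(1/κ + γ*β) ≤ min κ q := by
    intro ω hω
    have h7 : (1+γ-ω)/(1/κ + γ*β) ≤ (1+γ-ωl)/(1/κ + γ*β) :=
      (div_le_div_iff_of_pos_right hc0).mpr (by linarith [hω.1])
    nlinarith [mul_nonneg hκ.le (show (0:ℝ) ≤ ωh - ωl by linarith)]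
  have hxsB : ∀ ω ∈ Icc ωl ωh, (1+γ-ω)/(1/κ + γ*β) ≤ κ*(1+B-ω) := by
    intro ω hω
    have hid : κ*(1+B-ω) - (1+γ-ω)/(1/κ + γ*β) = (ωh-ω)*K := by
      rw [hB, hK]; field_simp; ring
    nlinarith [hid, mul_nonneg (show (0:ℝ) ≤ ωh-ω by linarith [hω.2]) hK0]
  have hanti : ∀ (ω x y : ℝ), (1+γ-ω)/(1/κ + γ*β) ≤ y → y ≤ x →
      U q κ γ β x ω ≤ U q κ γ β y ω := by
    intro ω x y h1 h2
    rw [U_key q κ γ β x ω hκ' hc', U_key q κ γ β y ω hκ' hc']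
    have h3 : (y - (1+γ-ω)/(1/κ + γ*β))^2 ≤ (x - (1+γ-ω)/(1/κ + γ*β))^2 := by nlinarith
    nlinarith
  have hsup : ∀ ω ∈ Icc ωl ωh,
      sSup ((fun x => U q κ γ β x ω) '' Icc (0:ℝ) (min κ q))
        = q*ω + (1+γ-ω)^2/(2*(1/κ + γ*β)) := by
    intro ω hω
    apply IsGreatest.csSup_eq
    constructor
    · refine ⟨(1+γ-ω)/(1/κ + γ*β), ⟨hxs0 ω hω, hxsm ω hω⟩, ?_⟩
      beta_reduce
      rw [U_key q κ γ β _ ω hκ' hc']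
      simp
    · rintro y ⟨x, hx, rfl⟩
      beta_reduce
      rw [U_key q κ γ β x ω hκ' hc']
      nlinarith [sq_nonneg (x - (1+γ-ω)/(1/κ + γ*β))]
  have hIP : Integrable (fun ω => q*ω + (1+γ-ω)^2/(2*(1/κ + γ*β))) Λ := by
    apply integ_help hae (by fun_prop) (q + (1+γ)^2/(2*(1/κ + γ*β)))
    intro ω hω
    have h1 : (1+γ-ω)^2 ≤ (1+γ)^2 := by nlinarith [hω.1, hω.2]
    have h2 : (1+γ-ω)^2/(2*(1/κ + γ*β)) ≤ (1+γ)^2/(2*(1/κ + γ*β)) :=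
      (div_le_div_iff_of_pos_right (by linarith)).mpr h1
    have h3 : 0 ≤ q*ω := mul_nonneg hq0.le (by linarith [hω.1])
    have h4 : 0 ≤ (1+γ-ω)^2/(2*(1/κ + γ*β)) := div_nonneg (sq_nonneg _) (by linarith)
    have h5 : 0 ≤ (1+γ)^2/(2*(1/κ + γ*β)) := div_nonneg (sq_nonneg _) (by linarith)
    have h6 : q*ω ≤ q := by nlinarith [hω.2]
    rw [abs_le]
    constructor
    · linarith
    · linarith
  have hIsq : Integrable (fun ω => (ω - E)^2) Λ := by
    apply integ_help hae (by fun_prop) ((1+|E|)^2)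
    intro ω hω
    rw [abs_of_nonneg (sq_nonneg _)]
    apply sq_le_sq'
    · nlinarith [le_abs_self E, neg_abs_le E, hω.1]
    · nlinarith [le_abs_self E, neg_abs_le E, hω.2]
  have hID : ∀ a, 0 ≤ a → a ≤ B → Integrable (fun ω => U q κ γ β (κ*(1+a-ω)) ω) Λ := by
    intro a ha0 haB
    apply integ_help hae (by simp only [U]; fun_prop)
      (q + (1+γ)*(κ*(1+B)) + ((1/κ + γ*β)/2)*(κ*(1+B))^2)
    intro ω hω
    exact U_abs_bound q κ γ β _ ω _ hq0 hγ hc0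
      (mul_nonneg hκ.le (by linarith [hω.2]))
      (mul_le_mul_of_nonneg_left (by linarith [hω.1]) hκ.le)
      (by linarith [hω.1]) (by linarith [hω.2])
  have hIUP : ∀ α, 0 ≤ α →
      Integrable (fun ω => U q κ γ β (min (κ*(1+α-ω)) (min κ q)) ω) Λ := by
    intro α hα
    apply integ_help hae (by simp only [U]; fun_prop)
      (q + (1+γ)*(min κ q) + ((1/κ + γ*β)/2)*(min κ q)^2)
    intro ω hω
    exact U_abs_bound q κ γ β _ ω _ hq0 hγ hc0
      (le_min (mul_nonneg hκ.le (by linarith [hω.2])) hm0.le)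
      (min_le_right _ _)
      (by linarith [hω.1]) (by linarith [hω.2])
  have hGid : (fun ω => U q κ γ β (κ*(1+A-ω)) ω)
      = fun ω => (q*ω + (1+γ-ω)^2/(2*(1/κ + γ*β)))
          - ((1/κ + γ*β)/2*K^2) * (ω - E)^2 := by
    funext ω
    rw [U_key q κ γ β _ ω hκ' hc', hA, hK]
    field_simp
    ring
  have hDA : ∫ ω, U q κ γ β (κ*(1+A-ω)) ω ∂Λ
      = (∫ ω, (q*ω + (1+γ-ω)^2/(2*(1/κ + γ*β))) ∂Λ)
        - ((1/κ + γ*β)/2*K^2) * Vvar Λ := by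
    have hcm : Integrable (fun ω => ((1/κ + γ*β)/2*K^2) * (ω - E)^2) Λ :=
      hIsq.const_mul _
    rw [hGid, integral_sub hIP hcm, integral_const_mul]
    congr 1
    simp only [Vvar, ← hE]
  have hDle : ∀ a, 0 ≤ a → a ≤ B →
      ∫ ω, U q κ γ β (κ*(1+a-ω)) ω ∂Λ ≤ ∫ ω, U q κ γ β (κ*(1+A-ω)) ω ∂Λ := by
    intro a ha0 haB
    have hfa : (fun ω => U q κ γ β (κ*(1+a-ω)) ω)
        = fun ω => (U q κ γ β (κ*(1+A-ω)) ω + (-((1/κ + γ*β)/2 * κ^2 * (a-A)^2)))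
            + (-((1/κ + γ*β)*κ*K*(a-A)))*(E-ω) := by
      funext ω
      rw [U_key q κ γ β (κ*(1+a-ω)) ω hκ' hc', U_key q κ γ β (κ*(1+A-ω)) ω hκ' hc',
        hA, hK]
      field_simp
      ring
    have hi0 : Integrable (fun ω => E - ω) Λ := (integrable_const E).sub hIid
    have hi1 : Integrable
        (fun ω => U q κ γ β (κ*(1+A-ω)) ω + (-((1/κ + γ*β)/2 * κ^2 * (a-A)^2))) Λ :=
      (hID A hA0 hBA).add (integrable_const _)
    have hi2 : Integrable (fun ω => (-((1/κ + γ*β)*κ*K*(a-A)))*(E-ω)) Λ :=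
      hi0.const_mul _
    rw [hfa, integral_add hi1 hi2,
      integral_add (hID A hA0 hBA) (integrable_const _), integral_const_mul,
      integral_sub (integrable_const E) hIid, hEint]
    simp only [integral_const, measure_univ, ENNReal.toReal_one, probReal_univ, one_smul, sub_self,
      mul_zero, add_zero]
    nlinarith [mul_nonneg (mul_nonneg (show (0:ℝ) ≤ (1/κ + γ*β)/2 by linarith)
      (sq_nonneg κ)) (sq_nonneg (a-A))]
  have hUPA : UP q κ γ β Λ A = ∫ ω, U q κ γ β (κ*(1+A-ω)) ω ∂Λ := by
    simp only [UP]
    apply integral_congr_ae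
    filter_upwards [hae] with ω hω
    rw [min_eq_left (hbind ω hω A hBA)]
  have hUPle : ∀ α, 0 ≤ α →
      UP q κ γ β Λ α ≤ ∫ ω, U q κ γ β (κ*(1+A-ω)) ω ∂Λ := by
    intro α hα
    have hmin0 : 0 ≤ min α B := le_min hα hB0
    have h9 : UP q κ γ β Λ α ≤ ∫ ω, U q κ γ β (κ*(1+(min α B)-ω)) ω ∂Λ := by
      simp only [UP]
      apply integral_mono_ae (hIUP α hα) (hID _ hmin0 (min_le_right _ _))
      filter_upwards [hae] with ω hω
      rcases le_or_gt α B with h | h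
      · rw [min_eq_left h, min_eq_left (hbind ω hω α h)]
      · rw [min_eq_right h.le]
        apply hanti ω _ _ (hxsB ω hω)
        exact le_min (mul_le_mul_of_nonneg_left (by linarith) hκ.le)
          (hbind ω hω B le_rfl)
    exact le_trans h9 (hDle _ hmin0 (min_le_right _ _))
  have hVP : VP q κ γ β Λ = ∫ ω, U q κ γ β (κ*(1+A-ω)) ω ∂Λ := by
    simp only [VP]
    apply IsGreatest.csSup_eq
    refine ⟨⟨A, hA0, hUPA⟩, ?_⟩
    rintro y ⟨α, hα, rfl⟩
    exact hUPle α hα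
  have hVs : Vstar q κ γ β Λ = ∫ ω, (q*ω + (1+γ-ω)^2/(2*(1/κ + γ*β))) ∂Λ := by
    simp only [Vstar]
    apply integral_congr_ae
    filter_upwards [hae] with ω hω
    exact hsup ω hω
  rw [hVs, hVP, hDA]
  have h1κγβ : (1:ℝ) + κ*γ*β ≠ 0 := by positivity
  have hcoef : (1/κ + γ*β)/2*K^2 = 1/2*(κ*γ*β)^2*κ/(1+κ*γ*β) := by
    rw [hK]
    field_simp
    ring
  linear_combination (Vvar Λ) * hcoef
end

section
/- For every Q ∈ [0, min{κ,q}] and every ω ∈ [ω̲, ω̄], the quota-second policy Q admits the same measure of minority students as the priority policy α = Q/κ, i.e. min{κ(1−ω)+Q, min{κ,q}} = min{κ(1+Q/κ−ω), min{κ,q}}; consequently the optimal quota-second value sup_{Q ∈ [0, min{κ,q}]} ∫ U(min{κ(1−ω)+Q, min{κ,q}}, ω) dΛ(ω) equals V_P, and, assuming Var[ω] > 0, quota-second policies are weakly preferred to quota-first policies (V_P ≥ V_Q) if and only if κγβ ≤ 1. -/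
open Set MeasureTheory

/-- Value of the quota-second policy Q, which admits measure
`min{κ(1−ω)+Q, min{κ,q}}`. -/
noncomputable def UQ2 (q κ γ β : ℝ) (Λ : Measure ℝ) (Q : ℝ) : ℝ :=
  ∫ ω, U q κ γ β (min (κ*(1-ω) + Q) (min κ q)) ω ∂Λ

lemma ae_mem_aux (Λ : Measure ℝ) {a b : ℝ} (hsupp : Λ (Set.Icc a b)ᶜ = 0) :
    ∀ᵐ ω ∂Λ, ω ∈ Set.Icc a b := by
  rw [ae_iff]
  have : {x | ¬ x ∈ Set.Icc a b} = (Set.Icc a b)ᶜ := rfl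
  rw [this, hsupp]

lemma integrable_aux (Λ : Measure ℝ) [IsProbabilityMeasure Λ] {a b : ℝ}
    (hsupp : Λ (Set.Icc a b)ᶜ = 0) {f : ℝ → ℝ} (hf : Continuous f) :
    Integrable f Λ := by
  obtain ⟨C, hC⟩ := (isCompact_Icc (a := a) (b := b)).exists_bound_of_continuousOn
    hf.continuousOn
  refine (integrable_const C).mono' hf.aestronglyMeasurable ?_
  filter_upwards [ae_mem_aux Λ hsupp] with ω hω using hC ω hω

lemma integral_quad (Λ : Measure ℝ) [IsProbabilityMeasure Λ] {a b : ℝ}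
    (hsupp : Λ (Set.Icc a b)ᶜ = 0) (A B C : ℝ) :
    ∫ ω, (A + B*ω + C*ω^2) ∂Λ = A + B*(∫ ω, ω ∂Λ) + C*(∫ ω, ω^2 ∂Λ) := by
  have h1 : Integrable (fun ω : ℝ => ω) Λ := integrable_aux Λ hsupp continuous_id
  have h2 : Integrable (fun ω : ℝ => ω^2) Λ := integrable_aux Λ hsupp (by continuity)
  have e1 : ∫ ω, (A + B*ω + C*ω^2) ∂Λ = (∫ ω, (A + B*ω) ∂Λ) + ∫ ω, C*ω^2 ∂Λ :=
    integral_add ((integrable_const A).add (h1.const_mul B)) (h2.const_mul C)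
  have e2 : ∫ ω, (A + B*ω) ∂Λ = (∫ _ω : ℝ, A ∂Λ) + ∫ ω, B*ω ∂Λ :=
    integral_add (integrable_const A) (h1.const_mul B)
  rw [e1, e2, integral_const, integral_const_mul, integral_const_mul]
  simp

/-- Explicit value of the interior priority policy. -/
noncomputable def Pf (q κ γ c M1 M2 α : ℝ) : ℝ :=
  ((1+γ)*(κ*(1+α)) - (1/2)*c*κ^2*(1+α)^2)
    + (q - (1+γ)*κ - κ*(1+α) + c*κ^2*(1+α))*M1 + (κ - (1/2)*c*κ^2)*M2

/-- Explicit value of an interior quota policy. -/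
noncomputable def hfv (q γ c M1 Q : ℝ) : ℝ := q*M1 + (1+γ-M1)*Q - (1/2)*c*Q^2

lemma sub_eq_nonneg_le {a b d : ℝ} (h : a - b = d) (hd : 0 ≤ d) : b ≤ a := by linarith

lemma Uup_aux (q κ γ β c x y ω : ℝ) (hcdef : 1/κ + γ*β = c) (hc : 0 < c)
    (hxy : x ≤ y) (hy : c*y ≤ 1+γ-ω) : U q κ γ β x ω ≤ U q κ γ β y ω := by
  unfold U
  rw [hcdef]
  nlinarith [mul_nonneg (sub_nonneg.mpr hxy)
    (by nlinarith [mul_nonneg hc.le (sub_nonneg.mpr hxy)] : (0:ℝ) ≤ 1+γ-ω - (1/2)*c*(x+y))]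

lemma Udown_aux (q κ γ β c x y ω : ℝ) (hcdef : 1/κ + γ*β = c) (hc : 0 < c)
    (hxy : x ≤ y) (hx : 1+γ-ω ≤ c*x) : U q κ γ β y ω ≤ U q κ γ β x ω := by
  unfold U
  rw [hcdef]
  nlinarith [mul_nonneg (sub_nonneg.mpr hxy)
    (by nlinarith [mul_nonneg hc.le (sub_nonneg.mpr hxy)] : (0:ℝ) ≤ (1/2)*c*(x+y) - (1+γ-ω))]

set_option maxHeartbeats 2000000 in
lemma Pdiff_aux (q κ γ c M1 M2 α : ℝ) (hc : c ≠ 0) (hκ : κ ≠ 0) :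
    Pf q κ γ c M1 M2 (M1 - 1 + (1+γ-M1)/(c*κ)) - Pf q κ γ c M1 M2 α
      = (1/2)*c*κ^2*(α-(M1 - 1 + (1+γ-M1)/(c*κ)))^2 := by
  unfold Pf; field_simp; ring

lemma hdiff_aux (q γ c M1 Q : ℝ) (hc : c ≠ 0) :
    hfv q γ c M1 ((1+γ-M1)/c) - hfv q γ c M1 Q = (1/2)*c*(Q-(1+γ-M1)/c)^2 := by
  unfold hfv; field_simp; ring

set_option maxHeartbeats 2000000 in
lemma diffexp_aux (q κ γ c M1 M2 : ℝ) (hc : c ≠ 0) (hκ : κ ≠ 0) :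
    Pf q κ γ c M1 M2 (M1 - 1 + (1+γ-M1)/(c*κ)) - hfv q γ c M1 ((1+γ-M1)/c)
      = (κ - (1/2)*c*κ^2)*(M2 - M1^2) := by
  unfold Pf hfv; field_simp; ring

lemma iff_aux {κ t V d : ℝ} (hκ : 0 < κ) (hV : 0 < V) (hd : d = (κ/2)*(1-t)*V) :
    0 ≤ d ↔ t ≤ 1 := by
  rw [hd]
  constructor
  · intro h; nlinarith [mul_pos hκ hV]
  · intro h; nlinarith [mul_pos hκ hV]

set_option maxHeartbeats 2000000 in
/-- A quota-second policy Q admits the same measure of minority students as the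
priority policy α = Q/κ in every state; hence the optimal quota-second value
equals V_P; and, if Var[ω] > 0, quota-second (equivalently, priorities) is weakly
preferred to quota-first iff κγβ ≤ 1. -/
theorem stmt_8 (q κ γ β ωl ωh : ℝ)
    (hq0 : 0 < q) (hq1 : q ≤ 1) (hκ : 0 < κ) (hγ : 0 ≤ γ) (hβ : 0 ≤ β)
    (hωl : 0 ≤ ωl) (hωlt : ωl < ωh) (hωh : ωh ≤ 1)
    (hreg1 : (1 + γ - ωl)/(1/κ + γ*β) + κ*(ωh - ωl) < min κ q)
    (hreg2 : κ*(1 - ωl) < (1 + γ - ωh)/(1/κ + γ*β))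
    (Λ : Measure ℝ) [IsProbabilityMeasure Λ] (hsupp : Λ (Set.Icc ωl ωh)ᶜ = 0) :
    (∀ Q ∈ Set.Icc (0:ℝ) (min κ q), ∀ ω ∈ Set.Icc ωl ωh,
      min (κ*(1-ω) + Q) (min κ q) = min (κ*(1 + Q/κ - ω)) (min κ q)) ∧
    sSup (UQ2 q κ γ β Λ '' Set.Icc (0:ℝ) (min κ q)) = VP q κ γ β Λ ∧
    (0 < Vvar Λ → (VQ q κ γ β Λ ≤ VP q κ γ β Λ ↔ κ*γ*β ≤ 1)) := by
  have hκ' : κ ≠ 0 := ne_of_gt hκ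
  have hωl1 : ωl < 1 := lt_of_lt_of_le hωlt hωh
  obtain ⟨c, hcdef⟩ : ∃ x, 1/κ + γ*β = x := ⟨_, rfl⟩
  obtain ⟨m, hmdef⟩ : ∃ x, min κ q = x := ⟨_, rfl⟩
  have hc : 0 < c := by
    have h1 : 0 < 1/κ := by positivity
    have h2 : 0 ≤ γ*β := mul_nonneg hγ hβ
    rw [← hcdef]; linarith
  have hc' : c ≠ 0 := ne_of_gt hc
  have hm : 0 < m := hmdef ▸ lt_min hκ hq0
  rw [hcdef, hmdef] at hreg1
  rw [hcdef] at hreg2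
  rw [hmdef]
  have hreg1' : 1 + γ - ωl < (m - κ*(ωh - ωl))*c := by
    have h2 : (1 + γ - ωl)/c < m - κ*(ωh - ωl) := by linarith
    exact (div_lt_iff₀ hc).mp h2
  have hreg2' : κ*(1 - ωl)*c < 1 + γ - ωh := (lt_div_iff₀ hc).mp hreg2
  have hae := ae_mem_aux Λ hsupp
  have hint : ∀ {f : ℝ → ℝ}, Continuous f → Integrable f Λ :=
    fun hf => integrable_aux Λ hsupp hf
  obtain ⟨M1, hM1⟩ : ∃ x, (∫ ω, ω ∂Λ) = x := ⟨_, rfl⟩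
  obtain ⟨M2, hM2⟩ : ∃ x, (∫ ω, ω^2 ∂Λ) = x := ⟨_, rfl⟩
  have hIQ : ∀ A B C : ℝ, (∫ ω, (A + B*ω + C*ω^2) ∂Λ) = A + B*M1 + C*M2 := by
    intro A B C; rw [integral_quad Λ hsupp, hM1, hM2]
  have hM1l : ωl ≤ M1 := by
    have h := integral_mono_ae (integrable_const ωl) (hint (f := fun ω : ℝ => ω) continuous_id)
      (by filter_upwards [hae] with ω hω using hω.1)
    rw [hM1] at h; simpa using h
  have hM1h : M1 ≤ ωh := by
    have h := integral_mono_ae (hint (f := fun ω : ℝ => ω) continuous_id) (integrable_const ωh)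
      (by filter_upwards [hae] with ω hω using hω.2)
    rw [hM1] at h; simpa using h
  -- monotonicity of U in x
  have hUup : ∀ x y ω : ℝ, x ≤ y → c*y ≤ 1+γ-ω → U q κ γ β x ω ≤ U q κ γ β y ω :=
    fun x y ω hxy hy => Uup_aux q κ γ β c x y ω hcdef hc hxy hy
  have hUdown : ∀ x y ω : ℝ, x ≤ y → 1+γ-ω ≤ c*x → U q κ γ β y ω ≤ U q κ γ β x ω :=
    fun x y ω hxy hx => Udown_aux q κ γ β c x y ω hcdef hc hxy hx
  -- integrability of policy payoffs
  have hcontU : ∀ {g : ℝ → ℝ}, Continuous g → Continuous (fun ω => U q κ γ β (g ω) ω) := by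
    intro g hg; unfold U; fun_prop
  have hintUP : ∀ α : ℝ, Integrable (fun ω => U q κ γ β (min (κ*(1+α-ω)) (min κ q)) ω) Λ :=
    fun α => hint (hcontU ((by fun_prop : Continuous fun ω : ℝ => κ*(1+α-ω)).min continuous_const))
  have hintUQ : ∀ Q : ℝ, Integrable (fun ω => U q κ γ β (min (max Q (κ*(1-ω))) (min κ q)) ω) Λ :=
    fun Q => hint (hcontU ((continuous_const.max (by fun_prop)).min continuous_const))
  -- exact value of interior priority policies
  have hUPeq : ∀ α : ℝ, κ*(1+α-ωl) ≤ m → UP q κ γ β Λ α = Pf q κ γ c M1 M2 α := by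
    intro α hα
    have e : UP q κ γ β Λ α = ∫ ω, (((1+γ)*(κ*(1+α)) - (1/2)*c*κ^2*(1+α)^2)
        + (q - (1+γ)*κ - κ*(1+α) + c*κ^2*(1+α))*ω + (κ - (1/2)*c*κ^2)*ω^2) ∂Λ := by
      unfold UP
      refine integral_congr_ae ?_
      filter_upwards [hae] with ω hω
      have hle : κ*(1+α-ω) ≤ min κ q := by
        rw [hmdef]; nlinarith [mul_nonneg hκ.le (sub_nonneg.mpr hω.1)]
      rw [min_eq_left hle]
      unfold U
      rw [hcdef]
      ring
    rw [e, hIQ]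
    unfold Pf
    ring
  -- exact value of interior quota policies
  have hUQeq : ∀ Q : ℝ, κ*(1-ωl) ≤ Q → Q ≤ m → UQ q κ γ β Λ Q = hfv q γ c M1 Q := by
    intro Q h1 h2
    have e : UQ q κ γ β Λ Q = ∫ ω, (((1+γ)*Q - (1/2)*c*Q^2) + (q - Q)*ω + 0*ω^2) ∂Λ := by
      unfold UQ
      refine integral_congr_ae ?_
      filter_upwards [hae] with ω hω
      have hmax : max Q (κ*(1-ω)) = Q :=
        max_eq_left (by nlinarith [mul_nonneg hκ.le (sub_nonneg.mpr hω.1)])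
      have hminq : Q ≤ min κ q := by rw [hmdef]; exact h2
      rw [hmax, min_eq_left hminq]
      unfold U
      rw [hcdef]
      ring
    rw [e, hIQ]
    unfold hfv
    ring
  -- quadratic comparison identities
  have hPdiff : ∀ α : ℝ, Pf q κ γ c M1 M2 (M1 - 1 + (1+γ-M1)/(c*κ)) - Pf q κ γ c M1 M2 α
      = (1/2)*c*κ^2*(α-(M1 - 1 + (1+γ-M1)/(c*κ)))^2 :=
    fun α => Pdiff_aux q κ γ c M1 M2 α hc' hκ'
  have hhdiff : ∀ Q : ℝ, hfv q γ c M1 ((1+γ-M1)/c) - hfv q γ c M1 Q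
      = (1/2)*c*(Q-(1+γ-M1)/c)^2 :=
    fun Q => hdiff_aux q γ c M1 Q hc'
  have hdiffexp : Pf q κ γ c M1 M2 (M1 - 1 + (1+γ-M1)/(c*κ)) - hfv q γ c M1 ((1+γ-M1)/c)
      = (κ - (1/2)*c*κ^2)*(M2 - M1^2) := diffexp_aux q κ γ c M1 M2 hc' hκ'
  obtain ⟨αs, hαsdef⟩ : ∃ x, M1 - 1 + (1+γ-M1)/(c*κ) = x := ⟨_, rfl⟩
  obtain ⟨Qs, hQsdef⟩ : ∃ x, (1+γ-M1)/c = x := ⟨_, rfl⟩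
  rw [hαsdef] at hPdiff hdiffexp
  rw [hQsdef] at hhdiff hdiffexp
  have hαsrel : c*κ*αs = c*κ*(M1-1) + (1+γ-M1) := by
    rw [← hαsdef]; field_simp
  have hQsrel : c*Qs = 1+γ-M1 := by rw [← hQsdef]; field_simp
  have hcκ : 0 < c*κ := mul_pos hc hκ
  -- location of the optimal priority level
  have hαs0 : 0 ≤ αs := by
    nlinarith [hαsrel, hreg2', mul_nonneg hcκ.le (sub_nonneg.mpr hM1l), hcκ]
  have hαsub : κ*(1+αs-ωl) ≤ m := by
    have h1 : c*(κ*(1+αs-ωl)) < c*m := by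
      nlinarith [hαsrel, hreg1', mul_nonneg hcκ.le (sub_nonneg.mpr hM1h)]
    exact le_of_lt ((mul_lt_mul_iff_right₀ hc).mp h1)
  have hκ1ωl_m : κ*(1-ωl) ≤ m := by
    have h1 : c*(κ*(1-ωl)) < c*m := by
      nlinarith [hreg2', hreg1',
        mul_nonneg (mul_nonneg hc.le hκ.le) (by linarith : (0:ℝ) ≤ ωh - ωl)]
    exact le_of_lt ((mul_lt_mul_iff_right₀ hc).mp h1)
  have hQslo : κ*(1-ωl) ≤ Qs := by
    have h1 : c*(κ*(1-ωl)) < c*Qs := by nlinarith [hQsrel, hreg2']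
    exact le_of_lt ((mul_lt_mul_iff_right₀ hc).mp h1)
  have hQsm : Qs ≤ m := by
    have h1 : c*Qs < c*m := by
      nlinarith [hQsrel, hreg1',
        mul_nonneg (mul_nonneg hc.le hκ.le) (by linarith : (0:ℝ) ≤ ωh - ωl)]
    exact le_of_lt ((mul_lt_mul_iff_right₀ hc).mp h1)
  have hQsnn : 0 ≤ Qs :=
    le_trans (mul_nonneg hκ.le (by linarith)) hQslo
  -- the priority value is maximized at αs
  have hUP_le : ∀ α : ℝ, 0 ≤ α → UP q κ γ β Λ α ≤ Pf q κ γ c M1 M2 αs := by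
    intro α hα0
    by_cases hcase : κ*(1+α-ωl) ≤ m
    · rw [hUPeq α hcase]
      exact sub_eq_nonneg_le (hPdiff α)
        (mul_nonneg (mul_nonneg (mul_nonneg (by norm_num : (0:ℝ) ≤ 1/2) hc.le)
          (sq_nonneg κ)) (sq_nonneg (α-αs)))
    · push_neg at hcase
      obtain ⟨αb, hαb⟩ : ∃ x, m/κ - 1 + ωl = x := ⟨_, rfl⟩
      have habar : κ*(1+αb-ωl) = m := by rw [← hαb]; field_simp; ring
      have habar' : c*(κ*(1+αb-ωl)) = c*m := by rw [habar]
      have hα_ge : αb ≤ α := by nlinarith [habar]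
      have hstep : UP q κ γ β Λ α ≤ UP q κ γ β Λ αb := by
        unfold UP
        refine integral_mono_ae (hintUP α) (hintUP αb) ?_
        filter_upwards [hae] with ω hω
        have hbl : κ*(1+αb-ω) ≤ min κ q := by
          rw [hmdef]; nlinarith [mul_nonneg hκ.le (sub_nonneg.mpr hω.1)]
        rw [min_eq_left hbl]
        refine hUdown (κ*(1+αb-ω)) (min (κ*(1+α-ω)) (min κ q)) ω ?_ ?_
        · refine le_min ?_ hbl
          nlinarith [mul_nonneg hκ.le (sub_nonneg.mpr hα_ge)]
        · nlinarith [habar', hreg1',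
            mul_nonneg (mul_nonneg hc.le hκ.le) (sub_nonneg.mpr hω.2), hω.1]
      rw [hUPeq αb (le_of_eq habar)] at hstep
      exact le_trans hstep (sub_eq_nonneg_le (hPdiff αb)
        (mul_nonneg (mul_nonneg (mul_nonneg (by norm_num : (0:ℝ) ≤ 1/2) hc.le)
          (sq_nonneg κ)) (sq_nonneg (αb-αs))))
  have hUPαs : UP q κ γ β Λ αs = Pf q κ γ c M1 M2 αs := hUPeq αs hαsub
  have hVP : VP q κ γ β Λ = Pf q κ γ c M1 M2 αs := by
    unfold VP
    refine IsGreatest.csSup_eq ⟨⟨αs, hαs0, hUPαs⟩, ?_⟩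
    rintro y ⟨α, hα, rfl⟩
    exact hUP_le α hα
  -- quota-second equals priority
  have hUQ2 : ∀ Q : ℝ, UQ2 q κ γ β Λ Q = UP q κ γ β Λ (Q/κ) := by
    intro Q
    unfold UQ2 UP
    refine integral_congr_ae (Filter.Eventually.of_forall fun ω => ?_)
    have : κ*(1 + Q/κ - ω) = κ*(1-ω) + Q := by field_simp; ring
    simp only [this]
  have hsup2 : sSup (UQ2 q κ γ β Λ '' Set.Icc (0:ℝ) m) = Pf q κ γ c M1 M2 αs := by
    refine IsGreatest.csSup_eq ⟨⟨κ*αs, ⟨mul_nonneg hκ.le hαs0, ?_⟩, ?_⟩, ?_⟩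
    · nlinarith [hαsub, mul_nonneg hκ.le (by linarith : (0:ℝ) ≤ 1-ωl)]
    · rw [hUQ2, mul_div_cancel_left₀ αs hκ']
      exact hUPαs
    · rintro y ⟨Q, hQ, rfl⟩
      rw [hUQ2 Q]
      exact hUP_le _ (div_nonneg hQ.1 hκ.le)
  -- quota-first value
  have hUQ_le : ∀ Q ∈ Set.Icc (0:ℝ) m, UQ q κ γ β Λ Q ≤ hfv q γ c M1 Qs := by
    intro Q hQ
    by_cases hcase : κ*(1-ωl) ≤ Q
    · rw [hUQeq Q hcase hQ.2]
      exact sub_eq_nonneg_le (hhdiff Q)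
        (mul_nonneg (mul_nonneg (by norm_num : (0:ℝ) ≤ 1/2) hc.le) (sq_nonneg (Q-Qs)))
    · push_neg at hcase
      have hstep : UQ q κ γ β Λ Q ≤ UQ q κ γ β Λ (κ*(1-ωl)) := by
        unfold UQ
        refine integral_mono_ae (hintUQ Q) (hintUQ (κ*(1-ωl))) ?_
        filter_upwards [hae] with ω hω
        have h1 : κ*(1-ω) ≤ κ*(1-ωl) := by
          nlinarith [mul_nonneg hκ.le (sub_nonneg.mpr hω.1)]
        have h2 : min (max (κ*(1-ωl)) (κ*(1-ω))) (min κ q) = κ*(1-ωl) := by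
          rw [max_eq_left h1]
          exact min_eq_left (by rw [hmdef]; exact hκ1ωl_m)
        rw [h2]
        refine hUup (min (max Q (κ*(1-ω))) (min κ q)) (κ*(1-ωl)) ω ?_ ?_
        · exact le_trans (min_le_left _ _) (max_le hcase.le h1)
        · nlinarith [hreg2', hω.2]
      rw [hUQeq (κ*(1-ωl)) le_rfl hκ1ωl_m] at hstep
      exact le_trans hstep (sub_eq_nonneg_le (hhdiff (κ*(1-ωl)))
        (mul_nonneg (mul_nonneg (by norm_num : (0:ℝ) ≤ 1/2) hc.le) (sq_nonneg (κ*(1-ωl)-Qs))))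
  have hVQ : VQ q κ γ β Λ = hfv q γ c M1 Qs := by
    unfold VQ
    rw [hmdef]
    refine IsGreatest.csSup_eq ⟨⟨Qs, ⟨hQsnn, hQsm⟩, hUQeq Qs hQslo hQsm⟩, ?_⟩
    rintro y ⟨Q, hQ, rfl⟩
    exact hUQ_le Q hQ
  -- variance
  have hVvar : Vvar Λ = M2 - M1^2 := by
    unfold Vvar Emean
    rw [hM1]
    have e : (∫ ω, (ω - M1)^2 ∂Λ) = ∫ ω, (M1^2 + (-2*M1)*ω + 1*ω^2) ∂Λ :=
      integral_congr_ae (Filter.Eventually.of_forall fun ω => by ring)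
    rw [e, hIQ]
    ring
  have hcoef : κ - (1/2)*c*κ^2 = (κ/2)*(1 - κ*(γ*β)) := by
    rw [← hcdef]; field_simp; ring
  have hkey : Pf q κ γ c M1 M2 αs - hfv q γ c M1 Qs = (κ/2)*(1-κ*(γ*β))*(M2-M1^2) := by
    rw [hdiffexp, hcoef]
  refine ⟨?_, ?_, ?_⟩
  · intro Q _ ω _
    have : κ*(1 + Q/κ - ω) = κ*(1-ω) + Q := by field_simp; ring
    rw [this]
  · rw [hsup2, hVP]
  · intro hV0
    rw [hVvar] at hV0
    rw [hVQ, hVP]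
    have hiff := iff_aux (t := κ*(γ*β)) hκ hV0 hkey
    constructor
    · intro h; linarith [hiff.mp (by linarith)]
    · intro h; linarith [hiff.mpr (by linarith)]
end

section
/- Define V_A := ∫ U(y_A(ω), ω) dΛ(ω), where for each ω, y_A(ω) is the unique y ∈ [0, min{κ,q}] solving y = min{κ(1 − max{ω − γ(1−βy), 0}), q}. Then V_A = V*, where V* = ∫ max_{x ∈ [0, min{κ,q}]} U(x, ω) dΛ(ω); that is, the adaptive priority mechanism A(y) = γ(1−βy) attains the first-best value. -/
open Set MeasureTheory

/-- If `y_A(ω)` is, for every ω ∈ [ω̲,ω̄], the (unique) y ∈ [0, min{κ,q}] solving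
the APM fixed-point equation `y = min{κ(1 − max{ω − γ(1−βy), 0}), q}`, then
`V_A = ∫ U(y_A(ω), ω) dΛ(ω)` equals the first-best value V*: the adaptive
priority mechanism `A(y) = γ(1−βy)` attains the first-best. -/
theorem stmt_9 (q κ γ β ωl ωh : ℝ)
    (hq0 : 0 < q) (hq1 : q ≤ 1) (hκ : 0 < κ) (hγ : 0 ≤ γ) (hβ : 0 ≤ β)
    (hωl : 0 ≤ ωl) (hωlt : ωl < ωh) (hωh : ωh ≤ 1)
    (hreg1 : (1 + γ - ωl)/(1/κ + γ*β) + κ*(ωh - ωl) < min κ q)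
    (hreg2 : κ*(1 - ωl) < (1 + γ - ωh)/(1/κ + γ*β))
    (Λ : Measure ℝ) [IsProbabilityMeasure Λ] (hsupp : Λ (Set.Icc ωl ωh)ᶜ = 0)
    (yA : ℝ → ℝ)
    (hyA : ∀ ω ∈ Set.Icc ωl ωh,
      yA ω ∈ Set.Icc (0:ℝ) (min κ q) ∧
      yA ω = min (κ * (1 - max (ω - γ*(1 - β * yA ω)) 0)) q) :
    ∫ ω, U q κ γ β (yA ω) ω ∂Λ = Vstar q κ γ β Λ := by
  have ha : (0:ℝ) < 1/κ + γ*β := by positivity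
  have key : ∀ ω ∈ Set.Icc ωl ωh,
      U q κ γ β (yA ω) ω
        = sSup ((fun x => U q κ γ β x ω) '' Set.Icc (0:ℝ) (min κ q)) := by
    intro ω hω
    obtain ⟨hω1, hω2⟩ := hω
    obtain ⟨a, hadef⟩ : ∃ a:ℝ, a = 1/κ + γ*β := ⟨_, rfl⟩
    rw [← hadef] at hreg1 hreg2 ha
    obtain ⟨x, hxdef⟩ : ∃ x:ℝ, x = (1 + γ - ω)/a := ⟨_, rfl⟩
    have hax : a * x = 1 + γ - ω := by rw [hxdef]; exact mul_div_cancel₀ _ (ne_of_gt ha)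
    -- bounds for x
    have hxlt : x < min κ q := by
      have h1 : x ≤ (1 + γ - ωl)/a := by
        rw [hxdef]; apply (div_le_div_iff_of_pos_right ha).mpr; linarith
      nlinarith [mul_pos hκ (sub_pos.2 hωlt)]
    have hxgt : κ*(1-ωl) < x := by
      have h1 : (1 + γ - ωh)/a ≤ x := by
        rw [hxdef]; apply (div_le_div_iff_of_pos_right ha).mpr; linarith
      linarith
    have hx0 : 0 < x := by nlinarith [mul_pos hκ (show (0:ℝ) < 1 - ωl by linarith)]
    have hxκ : x < κ := lt_of_lt_of_le hxlt (min_le_left _ _)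
    have hxq : x < q := lt_of_lt_of_le hxlt (min_le_right _ _)
    -- key identity: κ*γ*β*x = κ*(1+γ-ω) - x
    have hax2 : κ*(γ*β*x) = κ*(1+γ-ω) - x := by
      have h := hax
      rw [hadef] at h
      field_simp at h
      nlinarith
    -- the fixed point equals x
    obtain ⟨⟨hy0, hyle⟩, heq⟩ := hyA ω ⟨hω1, hω2⟩
    obtain ⟨y, hydef⟩ : ∃ y:ℝ, y = yA ω := ⟨_, rfl⟩
    rw [← hydef] at heq hy0 hyle
    have hyx : y = x := by
      rcases le_or_gt (ω - γ*(1 - β * y)) 0 with h1 | h1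
      · -- max = 0, y = min κ q, contradiction
        rw [max_eq_right h1] at heq
        simp only [sub_zero, mul_one] at heq
        exfalso
        have hyx' : x ≤ y := by rw [heq]; exact hxlt.le
        have h2 : 0 ≤ γ*β*(y - x) := mul_nonneg (mul_nonneg hγ hβ) (sub_nonneg.2 hyx')
        nlinarith [mul_nonneg hκ.le h2]
      · rw [max_eq_left h1.le] at heq
        rcases le_or_gt (κ * (1 - (ω - γ*(1 - β * y)))) q with h2 | h2
        · rw [min_eq_left h2] at heq
          have hlin : (1 + κ*(γ*β))*(y - x) = 0 := by linear_combination heq - hax2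
          have hpos : (0:ℝ) < 1 + κ*(γ*β) := by positivity
          have := mul_eq_zero.mp hlin
          rcases this with h | h
          · exact absurd h (ne_of_gt hpos)
          · linarith
        · rw [min_eq_right h2.le] at heq
          exfalso
          have hyx' : x ≤ y := by rw [heq]; exact hxq.le
          have h3 : 0 ≤ γ*β*(y - x) := mul_nonneg (mul_nonneg hγ hβ) (sub_nonneg.2 hyx')
          nlinarith [mul_nonneg hκ.le h3]
    rw [← hydef, hyx]
    have hgr : IsGreatest ((fun z => U q κ γ β z ω) '' Set.Icc (0:ℝ) (min κ q))
        (U q κ γ β x ω) := by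
      constructor
      · exact ⟨x, ⟨hx0.le, hxlt.le⟩, rfl⟩
      · rintro z ⟨w, hw, rfl⟩
        have hkey : U q κ γ β x ω - U q κ γ β w ω = (1/2)*a*(x-w)^2 := by
          unfold U
          linear_combination (-(x - w)) * hax + (1/2)*(x^2 - w^2)*hadef
        have h4 : 0 ≤ (1/2)*a*(x-w)^2 := by positivity
        simp only []
        linarith
    exact (hgr.csSup_eq).symm
  rw [Vstar]
  apply integral_congr_ae
  have h0 : ∀ᵐ ω ∂Λ, ω ∈ Set.Icc ωl ωh := by
    rw [ae_iff]
    exact hsupp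
  filter_upwards [h0] with ω hω
  exact key ω hω
end

section
/- If S and S' are two subsets of Θ, each of cardinality q and each implemented by the optimal APM A*, then W(S) = W(S'). -/
open Finset

/-- Number of agents from group `g` in `S`. -/
def xg {Θ M : Type*} [DecidableEq M] (m : Θ → M) (S : Finset Θ) (g : M) : ℕ :=
  (S.filter (fun θ => m θ = g)).card

/-- The authority's payoff from admitting the set `S`:
`W(S) = Σ_{θ∈S} h(s(θ)) + Σ_{g} u_g(x_g(S))`. -/
noncomputable def W {Θ M : Type*} [Fintype M] [DecidableEq M]
    (h : ℝ → ℝ) (s : Θ → ℝ) (u : M → ℕ → ℝ) (m : Θ → M) (S : Finset Θ) : ℝ :=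
  (∑ θ ∈ S, h (s θ)) + ∑ g : M, u g (xg m S g)

/-- `S` is implemented by the optimal APM `A*`. -/
def ImplementedByAPM {Θ M : Type*} [DecidableEq M]
    (h : ℝ → ℝ) (s : Θ → ℝ) (u : M → ℕ → ℝ) (m : Θ → M) (S : Finset Θ) : Prop :=
  (∀ θ ∈ S, ∀ θ' : Θ, θ' ∉ S → m θ' = m θ → s θ' < s θ) ∧
  (∀ θ ∈ S, ∀ θ' : Θ, θ' ∉ S → m θ' ≠ m θ →
    h (s θ') + (u (m θ') (xg m S (m θ') + 1) - u (m θ') (xg m S (m θ'))) ≤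
    h (s θ) + (u (m θ) (xg m S (m θ)) - u (m θ) (xg m S (m θ) - 1)))

lemma incr_mono (u : ℕ → ℝ) (hu : ∀ x, u (x+2) - u (x+1) ≤ u (x+1) - u x) :
    ∀ d x, u (x+d+1) - u (x+d) ≤ u (x+1) - u x := by
  intro d
  induction d with
  | zero => intro x; simp
  | succ n ih =>
    intro x
    have e : x + (n+1) = (x+1) + n := by ring
    calc u (x+(n+1)+1) - u (x+(n+1)) = u ((x+1)+n+1) - u ((x+1)+n) := by rw [e]
      _ ≤ u (x+1+1) - u (x+1) := ih (x+1)
      _ ≤ u (x+1) - u x := hu x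

lemma telescope_upper (u : ℕ → ℝ) (hu : ∀ x, u (x+2) - u (x+1) ≤ u (x+1) - u x) :
    ∀ (n k : ℕ), u (k+n) - u k ≤ (n : ℝ) * (u (k+1) - u k) := by
  intro n
  induction n with
  | zero => intro k; simp
  | succ n ih =>
    intro k
    have h1 : u (k+n+1) - u (k+n) ≤ u (k+1) - u k := incr_mono u hu n k
    have h2 := ih k
    push_cast
    have e : k + (n+1) = k + n + 1 := by ring
    rw [e]
    nlinarith [h1, h2]

lemma telescope_lower (u : ℕ → ℝ) (hu : ∀ x, u (x+2) - u (x+1) ≤ u (x+1) - u x) :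
    ∀ (n k : ℕ), (n : ℝ) * (u (k+n) - u (k+n-1)) ≤ u (k+n) - u k := by
  intro n
  induction n with
  | zero => intro k; simp
  | succ n ih =>
    intro k
    match n, ih with
    | 0, _ => simp
    | (m+1), ih =>
      have e1 : k + (m+1+1) - 1 = k + (m+1) := by omega
      rw [e1]
      have ihk := ih k
      have e2 : k + (m+1) - 1 = k + m := by omega
      rw [e2] at ihk
      have hd : u (k+m+2) - u (k+m+1) ≤ u (k+m+1) - u (k+m) := hu (k+m)
      have e3 : k + (m+1+1) = k + m + 2 := by ring
      have e4 : k + (m+1) = k + m + 1 := by ring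
      rw [e3]
      rw [e4] at ihk ⊢
      push_cast [Nat.cast_add] at ihk ⊢
      nlinarith [ihk, mul_le_mul_of_nonneg_left hd (by positivity : (0:ℝ) ≤ (m:ℝ)+1)]

lemma nested {Θ M : Type*} [DecidableEq Θ] [DecidableEq M]
    {h : ℝ → ℝ} {s : Θ → ℝ} {u : M → ℕ → ℝ} {m : Θ → M} {S S' : Finset Θ}
    (hS : ImplementedByAPM h s u m S) (hS' : ImplementedByAPM h s u m S')
    (g : M) (hle : xg m S g ≤ xg m S' g) :
    S.filter (fun θ => m θ = g) ⊆ S'.filter (fun θ => m θ = g) := by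
  by_contra hns
  obtain ⟨θ, hθ, hθn⟩ := Finset.not_subset.1 hns
  obtain ⟨hθS, hθg⟩ := Finset.mem_filter.1 hθ
  have hθS' : θ ∉ S' := fun hmem => hθn (Finset.mem_filter.2 ⟨hmem, hθg⟩)
  have hsub : S'.filter (fun θ => m θ = g) ⊆ S.filter (fun θ => m θ = g) := by
    intro θ'' hθ''
    obtain ⟨h1, h2⟩ := Finset.mem_filter.1 hθ''
    refine Finset.mem_filter.2 ⟨?_, h2⟩
    by_contra hθ''S
    have c1 := hS.1 θ hθS θ'' hθ''S (h2.trans hθg.symm)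
    have c2 := hS'.1 θ'' h1 θ hθS' (hθg.trans h2.symm)
    linarith
  have hlt : xg m S' g < xg m S g := by
    have h1 : insert θ (S'.filter (fun θ => m θ = g)) ⊆ S.filter (fun θ => m θ = g) :=
      Finset.insert_subset hθ hsub
    have h2 := Finset.card_le_card h1
    rw [Finset.card_insert_of_notMem hθn] at h2
    unfold xg
    omega
  omega

lemma W_le {Θ M : Type*} [DecidableEq Θ] [Fintype M] [DecidableEq M]
    (s : Θ → ℝ) (m : Θ → M) (h : ℝ → ℝ)
    (u : M → ℕ → ℝ)
    (hu : ∀ g x, u g (x+2) - u g (x+1) ≤ u g (x+1) - u g x)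
    (S S' : Finset Θ) (hcard : S.card = S'.card)
    (hS : ImplementedByAPM h s u m S) (hS' : ImplementedByAPM h s u m S') :
    W h s u m S' ≤ W h s u m S := by
  classical
  by_cases heq : S = S'
  · rw [heq]
  -- the two difference sets
  have hD' : (S' \ S).Nonempty := by
    rw [Finset.sdiff_nonempty]
    intro hsub
    exact heq (Finset.eq_of_subset_of_card_le hsub hcard.le).symm
  have hD : (S \ S').Nonempty := by
    rw [Finset.sdiff_nonempty]
    intro hsub
    exact heq (Finset.eq_of_subset_of_card_le hsub hcard.ge)
  -- groups of elements in the difference sets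
  have hgD' : ∀ θ' ∈ S' \ S, xg m S (m θ') < xg m S' (m θ') := by
    intro θ' hθ'
    rw [Finset.mem_sdiff] at hθ'
    by_contra hle
    push_neg at hle
    have hsub := nested hS' hS (m θ') hle
    have : θ' ∈ S.filter (fun θ => m θ = m θ') :=
      hsub (Finset.mem_filter.2 ⟨hθ'.1, rfl⟩)
    exact hθ'.2 (Finset.mem_filter.1 this).1
  have hgD : ∀ θ ∈ S \ S', xg m S' (m θ) < xg m S (m θ) := by
    intro θ hθ
    rw [Finset.mem_sdiff] at hθ
    by_contra hle
    push_neg at hle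
    have hsub := nested hS hS' (m θ) hle
    have : θ ∈ S'.filter (fun θ' => m θ' = m θ) :=
      hsub (Finset.mem_filter.2 ⟨hθ.1, rfl⟩)
    exact hθ.2 (Finset.mem_filter.1 this).1
  -- marginal value functions
  set φ : Θ → ℝ := fun θ' =>
    h (s θ') + (u (m θ') (xg m S (m θ') + 1) - u (m θ') (xg m S (m θ'))) with hφdef
  set ψ : Θ → ℝ := fun θ =>
    h (s θ) + (u (m θ) (xg m S (m θ)) - u (m θ) (xg m S (m θ) - 1)) with hψdef
  -- the maximizer of φ on S' \ S
  obtain ⟨θs, hθsD', hθsmax⟩ := Finset.exists_max_image (S' \ S) φ hD'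
  set C : ℝ := φ θs with hCdef
  -- ψ dominates C on S \ S'
  have hψC : ∀ θ ∈ S \ S', C ≤ ψ θ := by
    intro θ hθ
    have hθS : θ ∈ S := (Finset.mem_sdiff.1 hθ).1
    have hθsS : θs ∉ S := (Finset.mem_sdiff.1 hθsD').2
    have hne : m θs ≠ m θ := by
      intro hEq
      have h1 := hgD θ hθ
      have h2 := hgD' θs hθsD'
      rw [hEq] at h2
      omega
    exact hS.2 θ hθS θs hθsS hne
  -- φ is dominated by C on S' \ S
  have hφC : ∀ θ' ∈ S' \ S, φ θ' ≤ C := hθsmax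
  -- group-wise term
  set T : M → ℝ := fun g =>
    ((∑ θ ∈ S'.filter (fun θ => m θ = g), h (s θ)) -
      ∑ θ ∈ S.filter (fun θ => m θ = g), h (s θ)) +
    (u g (xg m S' g) - u g (xg m S g)) with hTdef
  have hW : W h s u m S' - W h s u m S = ∑ g : M, T g := by
    have e1 : ∑ g : M, T g =
        ((∑ g : M, ∑ θ ∈ S'.filter (fun θ => m θ = g), h (s θ)) -
          ∑ g : M, ∑ θ ∈ S.filter (fun θ => m θ = g), h (s θ)) +
        ((∑ g : M, u g (xg m S' g)) - ∑ g : M, u g (xg m S g)) := by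
      rw [Finset.sum_add_distrib, Finset.sum_sub_distrib, Finset.sum_sub_distrib]
    rw [e1, Finset.sum_fiberwise, Finset.sum_fiberwise]
    simp only [W]
    ring
  -- sdiff filters
  have hDgA : ∀ g : M, (S' \ S).filter (fun θ => m θ = g) =
      S'.filter (fun θ => m θ = g) \ S.filter (fun θ => m θ = g) := by
    intro g
    ext θ
    simp only [Finset.mem_filter, Finset.mem_sdiff]
    tauto
  have hDgR : ∀ g : M, (S \ S').filter (fun θ => m θ = g) =
      S.filter (fun θ => m θ = g) \ S'.filter (fun θ => m θ = g) := by
    intro g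
    ext θ
    simp only [Finset.mem_filter, Finset.mem_sdiff]
    tauto
  -- bound for groups with more S'-members
  have hboundA : ∀ g : M, xg m S g < xg m S' g →
      T g ≤ ∑ θ' ∈ (S' \ S).filter (fun θ => m θ = g), φ θ' := by
    intro g hg
    have hsub := nested hS hS' g hg.le
    have hcardDg : ((S' \ S).filter (fun θ => m θ = g)).card = xg m S' g - xg m S g := by
      rw [hDgA g, Finset.card_sdiff_of_subset hsub]
      rfl
    have hsplit : (∑ θ ∈ S'.filter (fun θ => m θ = g), h (s θ)) -
        ∑ θ ∈ S.filter (fun θ => m θ = g), h (s θ) =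
        ∑ θ ∈ (S' \ S).filter (fun θ => m θ = g), h (s θ) := by
      rw [hDgA g, eq_comm, eq_sub_iff_add_eq]
      exact Finset.sum_sdiff hsub
    have htel : u g (xg m S' g) - u g (xg m S g) ≤
        ((xg m S' g - xg m S g : ℕ) : ℝ) * (u g (xg m S g + 1) - u g (xg m S g)) := by
      have := telescope_upper (u g) (hu g) (xg m S' g - xg m S g) (xg m S g)
      rwa [Nat.add_sub_cancel' hg.le] at this
    have hφsum : ∑ θ' ∈ (S' \ S).filter (fun θ => m θ = g), φ θ' =
        (∑ θ' ∈ (S' \ S).filter (fun θ => m θ = g), h (s θ')) +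
        ((xg m S' g - xg m S g : ℕ) : ℝ) * (u g (xg m S g + 1) - u g (xg m S g)) := by
      have : ∀ θ' ∈ (S' \ S).filter (fun θ => m θ = g),
          φ θ' = h (s θ') + (u g (xg m S g + 1) - u g (xg m S g)) := by
        intro θ' hθ'
        have hm : m θ' = g := (Finset.mem_filter.1 hθ').2
        simp only [hφdef, hm]
      rw [Finset.sum_congr rfl this, Finset.sum_add_distrib, Finset.sum_const,
        hcardDg, nsmul_eq_mul]
    rw [hTdef]
    simp only
    rw [hsplit, hφsum]
    linarith
  -- bound for groups with more S-members
  have hboundR : ∀ g : M, xg m S' g < xg m S g →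
      T g ≤ -∑ θ ∈ (S \ S').filter (fun θ => m θ = g), ψ θ := by
    intro g hg
    have hsub := nested hS' hS g hg.le
    have hcardDg : ((S \ S').filter (fun θ => m θ = g)).card = xg m S g - xg m S' g := by
      rw [hDgR g, Finset.card_sdiff_of_subset hsub]
      rfl
    have hsplit : (∑ θ ∈ S.filter (fun θ => m θ = g), h (s θ)) -
        ∑ θ ∈ S'.filter (fun θ => m θ = g), h (s θ) =
        ∑ θ ∈ (S \ S').filter (fun θ => m θ = g), h (s θ) := by
      rw [hDgR g, eq_comm, eq_sub_iff_add_eq]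
      exact Finset.sum_sdiff hsub
    have htel : ((xg m S g - xg m S' g : ℕ) : ℝ) * (u g (xg m S g) - u g (xg m S g - 1)) ≤
        u g (xg m S g) - u g (xg m S' g) := by
      have := telescope_lower (u g) (hu g) (xg m S g - xg m S' g) (xg m S' g)
      rwa [Nat.add_sub_cancel' hg.le] at this
    have hψsum : ∑ θ ∈ (S \ S').filter (fun θ => m θ = g), ψ θ =
        (∑ θ ∈ (S \ S').filter (fun θ => m θ = g), h (s θ)) +
        ((xg m S g - xg m S' g : ℕ) : ℝ) * (u g (xg m S g) - u g (xg m S g - 1)) := by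
      have : ∀ θ ∈ (S \ S').filter (fun θ => m θ = g),
          ψ θ = h (s θ) + (u g (xg m S g) - u g (xg m S g - 1)) := by
        intro θ hθ
        have hm : m θ = g := (Finset.mem_filter.1 hθ).2
        simp only [hψdef, hm]
      rw [Finset.sum_congr rfl this, Finset.sum_add_distrib, Finset.sum_const,
        hcardDg, nsmul_eq_mul]
    rw [hTdef]
    simp only
    linarith
  -- T vanishes on balanced groups
  have hT0 : ∀ g : M, xg m S g = xg m S' g → T g = 0 := by
    intro g hg
    have h1 : S.filter (fun θ => m θ = g) = S'.filter (fun θ => m θ = g) :=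
      Finset.Subset.antisymm (nested hS hS' g hg.le) (nested hS' hS g hg.ge)
    rw [hTdef]
    simp only
    rw [h1, hg]
    ring
  -- split the sum
  set A : Finset M := Finset.univ.filter (fun g => xg m S g < xg m S' g) with hAdef
  set R : Finset M := Finset.univ.filter (fun g => xg m S' g < xg m S g) with hRdef
  have hARdisj : Disjoint A R := by
    rw [Finset.disjoint_left]
    intro g hgA hgR
    rw [hAdef, Finset.mem_filter] at hgA
    rw [hRdef, Finset.mem_filter] at hgR
    omega
  have hsum_split : ∑ g : M, T g = ∑ g ∈ A, T g + ∑ g ∈ R, T g := by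
    rw [← Finset.sum_union hARdisj]
    apply (Finset.sum_subset (Finset.subset_univ _) _).symm
    intro g _ hg
    rw [Finset.mem_union, hAdef, hRdef, Finset.mem_filter, Finset.mem_filter] at hg
    push_neg at hg
    apply hT0
    have h1 := hg.1 (Finset.mem_univ g)
    have h2 := hg.2 (Finset.mem_univ g)
    omega
  -- empty fibers off A and off R
  have hfibA : ∀ g : M, g ∉ A → (S' \ S).filter (fun θ => m θ = g) = ∅ := by
    intro g hg
    rw [Finset.filter_eq_empty_iff]
    intro θ' hθ'
    intro hm
    apply hg
    rw [hAdef, Finset.mem_filter]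
    exact ⟨Finset.mem_univ g, hm ▸ hgD' θ' hθ'⟩
  have hfibR : ∀ g : M, g ∉ R → (S \ S').filter (fun θ => m θ = g) = ∅ := by
    intro g hg
    rw [Finset.filter_eq_empty_iff]
    intro θ hθ
    intro hm
    apply hg
    rw [hRdef, Finset.mem_filter]
    exact ⟨Finset.mem_univ g, hm ▸ hgD θ hθ⟩
  -- total bounds
  have hAbound : ∑ g ∈ A, T g ≤ ∑ θ' ∈ S' \ S, φ θ' := by
    calc ∑ g ∈ A, T g ≤ ∑ g ∈ A, ∑ θ' ∈ (S' \ S).filter (fun θ => m θ = g), φ θ' := by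
          apply Finset.sum_le_sum
          intro g hgA
          rw [hAdef, Finset.mem_filter] at hgA
          exact hboundA g hgA.2
      _ = ∑ g : M, ∑ θ' ∈ (S' \ S).filter (fun θ => m θ = g), φ θ' := by
          apply Finset.sum_subset (Finset.subset_univ _)
          intro g _ hg
          rw [hfibA g hg, Finset.sum_empty]
      _ = ∑ θ' ∈ S' \ S, φ θ' := Finset.sum_fiberwise _ _ _
  have hRbound : ∑ g ∈ R, T g ≤ -∑ θ ∈ S \ S', ψ θ := by
    calc ∑ g ∈ R, T g ≤ ∑ g ∈ R, -∑ θ ∈ (S \ S').filter (fun θ => m θ = g), ψ θ := by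
          apply Finset.sum_le_sum
          intro g hgR
          rw [hRdef, Finset.mem_filter] at hgR
          exact hboundR g hgR.2
      _ = ∑ g : M, -∑ θ ∈ (S \ S').filter (fun θ => m θ = g), ψ θ := by
          apply Finset.sum_subset (Finset.subset_univ _)
          intro g _ hg
          rw [hfibR g hg, Finset.sum_empty, neg_zero]
      _ = -∑ θ ∈ S \ S', ψ θ := by
          simp only [← Finset.sum_neg_distrib]
          exact Finset.sum_fiberwise _ _ _
  -- cardinalities agree
  have hcards : (S' \ S).card = (S \ S').card := (Finset.card_sdiff_comm hcard.symm)
  have hφCsum : ∑ θ' ∈ S' \ S, φ θ' ≤ ((S' \ S).card : ℝ) * C := by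
    calc ∑ θ' ∈ S' \ S, φ θ' ≤ ∑ _θ' ∈ S' \ S, C := Finset.sum_le_sum hφC
      _ = ((S' \ S).card : ℝ) * C := by rw [Finset.sum_const, nsmul_eq_mul]
  have hψCsum : ((S \ S').card : ℝ) * C ≤ ∑ θ ∈ S \ S', ψ θ := by
    calc ((S \ S').card : ℝ) * C = ∑ _θ ∈ S \ S', C := by rw [Finset.sum_const, nsmul_eq_mul]
      _ ≤ ∑ θ ∈ S \ S', ψ θ := Finset.sum_le_sum hψC
  have hfinal : ∑ g : M, T g ≤ 0 := by
    rw [hsum_split]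
    have hc : ((S' \ S).card : ℝ) = ((S \ S').card : ℝ) := by exact_mod_cast hcards
    rw [hc] at hφCsum
    linarith
  linarith [hW, hfinal]

/-- If `S` and `S'` are two subsets of Θ, each of cardinality `q` and each
implemented by the optimal APM `A*`, then `W(S) = W(S')`. -/
theorem stmt_10 {Θ M : Type*} [Fintype Θ] [DecidableEq Θ] [Fintype M] [DecidableEq M]
    (s : Θ → ℝ) (hs : Function.Injective s) (hs01 : ∀ θ, s θ ∈ Set.Icc (0:ℝ) 1)
    (m : Θ → M) (q : ℕ) (hq : q ≤ Fintype.card Θ)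
    (h : ℝ → ℝ) (hh : StrictMonoOn h (Set.Icc (0:ℝ) 1))
    (u : M → ℕ → ℝ)
    (hu : ∀ g x, u g (x+2) - u g (x+1) ≤ u g (x+1) - u g x)
    (S S' : Finset Θ) (hScard : S.card = q) (hS'card : S'.card = q)
    (hS : ImplementedByAPM h s u m S) (hS' : ImplementedByAPM h s u m S') :
    W h s u m S = W h s u m S' := by
  have hc : S.card = S'.card := hScard.trans hS'card.symm
  exact le_antisymm (W_le s m h u hu S' S hc.symm hS' hS) (W_le s m h u hu S S' hc hS hS')
end

section
/- If S ⊆ Θ with |S| = q is implemented by the optimal APM A*, then S maximizes W among all subsets of Θ of cardinality q: for every S' ⊆ Θ with |S'| = q, W(S) ≥ W(S'). -/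
open Finset

lemma xg_insert' {Θ M : Type*} [DecidableEq Θ] [DecidableEq M] (m : Θ → M) (T : Finset Θ)
    (θ : Θ) (hθ : θ ∉ T) (g : M) :
    xg m (insert θ T) g = xg m T g + if m θ = g then 1 else 0 := by
  unfold xg
  rw [Finset.filter_insert]
  split_ifs with hm
  · rw [Finset.card_insert_of_notMem (fun hc => hθ (Finset.mem_of_mem_filter θ hc))]
  · simp

lemma W_insert' {Θ M : Type*} [DecidableEq Θ] [Fintype M] [DecidableEq M]
    (h : ℝ → ℝ) (s : Θ → ℝ) (u : M → ℕ → ℝ) (m : Θ → M)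
    (T : Finset Θ) (θ : Θ) (hθ : θ ∉ T) :
    W h s u m (insert θ T) =
      W h s u m T + h (s θ) + (u (m θ) (xg m T (m θ) + 1) - u (m θ) (xg m T (m θ))) := by
  unfold W
  rw [Finset.sum_insert hθ]
  have h3 : ∑ g, (u g (xg m (insert θ T) g) - u g (xg m T g))
      = u (m θ) (xg m T (m θ) + 1) - u (m θ) (xg m T (m θ)) := by
    rw [Fintype.sum_eq_single (m θ)]
    · rw [xg_insert' m T θ hθ, if_pos rfl]
    · intro g hg
      rw [xg_insert' m T θ hθ, if_neg (fun e => hg e.symm)]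
      simp
  rw [Finset.sum_sub_distrib] at h3
  linarith

/-- If `S ⊆ Θ` with `|S| = q` is implemented by the optimal APM `A*`, then `S`
maximizes `W` among all subsets of Θ of cardinality `q`. -/
theorem stmt_11 {Θ M : Type*} [Fintype Θ] [DecidableEq Θ] [Fintype M] [DecidableEq M]
    (s : Θ → ℝ) (hs : Function.Injective s) (hs01 : ∀ θ, s θ ∈ Set.Icc (0:ℝ) 1)
    (m : Θ → M) (q : ℕ) (hq : q ≤ Fintype.card Θ)
    (h : ℝ → ℝ) (hh : StrictMonoOn h (Set.Icc (0:ℝ) 1))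
    (u : M → ℕ → ℝ)
    (hu : ∀ g x, u g (x+2) - u g (x+1) ≤ u g (x+1) - u g x)
    (S : Finset Θ) (hScard : S.card = q)
    (hS : ImplementedByAPM h s u m S) :
    ∀ S' : Finset Θ, S'.card = q → W h s u m S' ≤ W h s u m S := by
  obtain ⟨hS1, hS2⟩ := hS
  -- the increment of u g is antitone
  have hmono : ∀ (g : M) {x y : ℕ}, x ≤ y →
      u g (y + 1) - u g y ≤ u g (x + 1) - u g x := by
    intro g x y hxy
    have ha : Antitone (fun x => u g (x + 1) - u g x) :=
      antitone_nat_of_succ_le (fun n => hu g n)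
    exact ha hxy
  have hsumS : ∑ g, xg m S g = q := by
    rw [← hScard]
    exact (Finset.card_eq_sum_card_fiberwise (fun x _ => Finset.mem_univ (m x))).symm
  suffices H : ∀ n : ℕ, ∀ S' : Finset Θ, S'.card = q → (S \ S').card ≤ n →
      W h s u m S' ≤ W h s u m S by
    intro S' hc
    exact H (S \ S').card S' hc le_rfl
  intro n
  induction n with
  | zero =>
    intro S' hc hn
    have hsub : S ⊆ S' := by
      rw [← Finset.sdiff_eq_empty_iff_subset]
      exact Finset.card_eq_zero.mp (Nat.le_zero.mp hn)
    have : S = S' := Finset.eq_of_subset_of_card_le hsub (by rw [hScard, hc])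
    rw [this]
  | succ n ih =>
    intro S' hc hn
    by_cases hSS : S = S'
    · rw [hSS]
    -- find a diverse swap pair θ ∈ S \ S', θ' ∈ S' \ S with the key inequality
    have hsumS' : ∑ g, xg m S' g = q := by
      rw [← hc]
      exact (Finset.card_eq_sum_card_fiberwise (fun x _ => Finset.mem_univ (m x))).symm
    have key : ∃ θ θ' : Θ, θ ∈ S ∧ θ ∉ S' ∧ θ' ∈ S' ∧ θ' ∉ S ∧
        (h (s θ') + (u (m θ') (xg m (S'.erase θ') (m θ') + 1)
            - u (m θ') (xg m (S'.erase θ') (m θ'))) ≤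
         h (s θ) + (u (m θ) (xg m (S'.erase θ') (m θ) + 1)
            - u (m θ) (xg m (S'.erase θ') (m θ)))) := by
      by_cases hall : ∀ g, xg m S g = xg m S' g
      · -- all group counts equal: take a same-group pair
        have hne : ¬ S ⊆ S' := fun hsub =>
          hSS (Finset.eq_of_subset_of_card_le hsub (by rw [hScard, hc]))
        obtain ⟨θ, hθS, hθS'⟩ := Finset.not_subset.mp hne
        have hf : ¬ S'.filter (fun x => m x = m θ) ⊆ S.filter (fun x => m x = m θ) := by
          intro hsub
          have heq : S'.filter (fun x => m x = m θ) = S.filter (fun x => m x = m θ) :=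
            Finset.eq_of_subset_of_card_le hsub (le_of_eq (hall (m θ)))
          have : θ ∈ S'.filter (fun x => m x = m θ) := by
            rw [heq]; exact Finset.mem_filter.mpr ⟨hθS, rfl⟩
          exact hθS' (Finset.mem_of_mem_filter θ this)
        obtain ⟨θ', hθ'f, hθ'f2⟩ := Finset.not_subset.mp hf
        obtain ⟨hθ'S', hθ'm⟩ := Finset.mem_filter.mp hθ'f
        have hθ'S : θ' ∉ S := fun hc' => hθ'f2 (Finset.mem_filter.mpr ⟨hc', hθ'm⟩)
        refine ⟨θ, θ', hθS, hθS', hθ'S', hθ'S, ?_⟩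
        have hlt : s θ' < s θ := hS1 θ hθS θ' hθ'S hθ'm
        have hle : h (s θ') ≤ h (s θ) := (hh (hs01 θ') (hs01 θ) hlt).le
        rw [hθ'm]
        linarith
      · -- counts differ: cross-group pair
        have hex1 : ∃ g, xg m S' g < xg m S g := by
          by_contra hcon
          push_neg at hcon
          exact hall fun g =>
            (Finset.sum_eq_sum_iff_of_le (fun i _ => hcon i)).mp
              (hsumS.trans hsumS'.symm) g (Finset.mem_univ g)
        have hex2 : ∃ g, xg m S g < xg m S' g := by
          by_contra hcon
          push_neg at hcon
          exact hall fun g =>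
            ((Finset.sum_eq_sum_iff_of_le (fun i _ => hcon i)).mp
              (hsumS'.trans hsumS.symm) g (Finset.mem_univ g)).symm
        obtain ⟨g, hg⟩ := hex1
        obtain ⟨g', hg'⟩ := hex2
        -- θ ∈ S \ S' with m θ = g
        have hfg : ¬ S.filter (fun x => m x = g) ⊆ S'.filter (fun x => m x = g) := by
          intro hsub
          have := Finset.card_le_card hsub
          unfold xg at hg
          omega
        obtain ⟨θ, hθf, hθf2⟩ := Finset.not_subset.mp hfg
        obtain ⟨hθS, hθm⟩ := Finset.mem_filter.mp hθf
        have hθS' : θ ∉ S' := fun hc' => hθf2 (Finset.mem_filter.mpr ⟨hc', hθm⟩)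
        -- θ' ∈ S' \ S with m θ' = g'
        have hfg' : ¬ S'.filter (fun x => m x = g') ⊆ S.filter (fun x => m x = g') := by
          intro hsub
          have := Finset.card_le_card hsub
          unfold xg at hg'
          omega
        obtain ⟨θ', hθ'f, hθ'f2⟩ := Finset.not_subset.mp hfg'
        obtain ⟨hθ'S', hθ'm⟩ := Finset.mem_filter.mp hθ'f
        have hθ'S : θ' ∉ S := fun hc' => hθ'f2 (Finset.mem_filter.mpr ⟨hc', hθ'm⟩)
        refine ⟨θ, θ', hθS, hθS', hθ'S', hθ'S, ?_⟩
        have hgg' : g ≠ g' := fun e => by rw [e] at hg; omega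
        have hmne : m θ' ≠ m θ := by rw [hθm, hθ'm]; exact hgg'.symm
        have hkey := hS2 θ hθS θ' hθ'S hmne
        -- counts in T := S'.erase θ'
        have hTg' : xg m (S'.erase θ') g' + 1 = xg m S' g' := by
          have h1 : θ' ∉ S'.erase θ' := Finset.notMem_erase θ' S'
          have h2 := xg_insert' m (S'.erase θ') θ' h1 g'
          rw [Finset.insert_erase hθ'S', hθ'm, if_pos rfl] at h2
          omega
        have hTg : xg m (S'.erase θ') g = xg m S' g := by
          have h1 : θ' ∉ S'.erase θ' := Finset.notMem_erase θ' S'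
          have h2 := xg_insert' m (S'.erase θ') θ' h1 g
          rw [Finset.insert_erase hθ'S', hθ'm, if_neg hgg'.symm] at h2
          omega
        -- θ ∈ S with m θ = g so xg m S g ≥ 1
        have hxS1 : 1 ≤ xg m S g := Finset.card_pos.mpr ⟨θ, hθf⟩
        obtain ⟨a, ha⟩ : ∃ a, xg m S g = a + 1 := ⟨xg m S g - 1, by omega⟩
        rw [hθm, hθ'm] at hkey
        rw [ha] at hkey
        simp only [Nat.add_sub_cancel] at hkey
        have hc1 : u g' (xg m (S'.erase θ') g' + 1) - u g' (xg m (S'.erase θ') g')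
            ≤ u g' (xg m S g' + 1) - u g' (xg m S g') := hmono g' (by omega)
        have hc2 : u g (a + 1) - u g a
            ≤ u g (xg m (S'.erase θ') g + 1) - u g (xg m (S'.erase θ') g) :=
          hmono g (by omega)
        rw [hθm, hθ'm]
        linarith
    obtain ⟨θ, θ', hθS, hθS', hθ'S', hθ'S, hineq⟩ := key
    set T := S'.erase θ' with hT
    have hθT : θ ∉ T := fun hmem => hθS' (Finset.mem_of_mem_erase hmem)
    have hθ'T : θ' ∉ T := Finset.notMem_erase θ' S'
    set S'' := insert θ T with hS''
    have hScard' : 1 ≤ S'.card := Finset.card_pos.mpr ⟨θ', hθ'S'⟩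
    have hTcard : T.card = S'.card - 1 := Finset.card_erase_of_mem hθ'S'
    have hS''card : S''.card = q := by
      rw [hS'', Finset.card_insert_of_notMem hθT, hTcard]
      omega
    have hW1 : W h s u m S' = W h s u m T + h (s θ')
        + (u (m θ') (xg m T (m θ') + 1) - u (m θ') (xg m T (m θ'))) := by
      conv_lhs => rw [← Finset.insert_erase hθ'S']
      exact W_insert' h s u m T θ' hθ'T
    have hW2 : W h s u m S'' = W h s u m T + h (s θ)
        + (u (m θ) (xg m T (m θ) + 1) - u (m θ) (xg m T (m θ))) :=
      W_insert' h s u m T θ hθT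
    have hstep : W h s u m S' ≤ W h s u m S'' := by
      rw [hW1, hW2]; linarith
    have hdiff : (S \ S'').card ≤ n := by
      have hsub : S \ S'' ⊆ (S \ S').erase θ := by
        intro x hx
        obtain ⟨hxS, hxS''⟩ := Finset.mem_sdiff.mp hx
        have hxθ : x ≠ θ := fun e => hxS'' (by rw [e, hS'']; exact Finset.mem_insert_self θ T)
        have hxθ' : x ≠ θ' := fun e => hθ'S (e ▸ hxS)
        have hxS' : x ∉ S' := fun hc' =>
          hxS'' (by rw [hS'']; exact Finset.mem_insert_of_mem (Finset.mem_erase.mpr ⟨hxθ', hc'⟩))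
        exact Finset.mem_erase.mpr ⟨hxθ, Finset.mem_sdiff.mpr ⟨hxS, hxS'⟩⟩
      have h1 : (S \ S'').card ≤ ((S \ S').erase θ).card := Finset.card_le_card hsub
      have h2 : ((S \ S').erase θ).card = (S \ S').card - 1 :=
        Finset.card_erase_of_mem (Finset.mem_sdiff.mpr ⟨hθS, hθS'⟩)
      have h3 : 1 ≤ (S \ S').card :=
        Finset.card_pos.mpr ⟨θ, Finset.mem_sdiff.mpr ⟨hθS, hθS'⟩⟩
      omega
    exact hstep.trans (ih S'' hS''card hdiff)
end

section
/- If S ⊆ Θ with |S| = q is not implemented by the optimal APM A*, then there exists S' ⊆ Θ with |S'| = q and W(S') > W(S); consequently every W-maximizing subset of cardinality q is implemented by A*. -/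
open Finset

lemma xg_swap {Θ M : Type*} [DecidableEq Θ] [DecidableEq M] (m : Θ → M)
    (S : Finset Θ) (θ θ' : Θ) (hθ : θ ∈ S) (hθ' : θ' ∉ S) (g : M) :
    xg m (insert θ' (S.erase θ)) g
      = xg m S g - (if m θ = g then 1 else 0) + (if m θ' = g then 1 else 0) := by
  unfold xg
  rw [filter_insert, filter_erase]
  have hθ'e : θ' ∉ (S.filter (fun θ => m θ = g)).erase θ := by
    simp only [mem_erase, mem_filter]; tauto
  have hθf : θ ∈ S.filter (fun θ => m θ = g) ↔ m θ = g := by simp [hθ]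
  have hθ'f : θ' ∉ S.filter (fun θ => m θ = g) := by simp [hθ']
  by_cases h1 : m θ' = g <;> by_cases h2 : m θ = g
  · rw [if_pos h1, if_pos h2, card_insert_of_notMem hθ'e,
      card_erase_of_mem (hθf.mpr h2)]
    simp [h1, h2]
  · rw [if_pos h1, if_neg h2, erase_eq_of_notMem (fun hc => h2 (hθf.mp hc)),
      card_insert_of_notMem hθ'f]
    simp [h1, h2]
  · rw [if_neg h1, if_pos h2, card_erase_of_mem (hθf.mpr h2)]
    simp [h1, h2]
  · rw [if_neg h1, if_neg h2, erase_eq_of_notMem (fun hc => h2 (hθf.mp hc))]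
    simp [h1, h2]

lemma xg_pos {Θ M : Type*} [DecidableEq Θ] [DecidableEq M] (m : Θ → M)
    (S : Finset Θ) (θ : Θ) (hθ : θ ∈ S) : 1 ≤ xg m S (m θ) := by
  have : θ ∈ S.filter (fun θ' => m θ' = m θ) := by simp [hθ]
  exact card_pos.mpr ⟨θ, this⟩

lemma card_swap {Θ : Type*} [DecidableEq Θ] (S : Finset Θ) (θ θ' : Θ)
    (hθ : θ ∈ S) (hθ' : θ' ∉ S) : (insert θ' (S.erase θ)).card = S.card := by
  have hθ'e : θ' ∉ S.erase θ := fun hc => hθ' (mem_of_mem_erase hc)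
  rw [card_insert_of_notMem hθ'e, card_erase_of_mem hθ,
    Nat.sub_add_cancel (card_pos.mpr ⟨θ, hθ⟩)]

lemma W_swap_same {Θ M : Type*} [DecidableEq Θ] [Fintype M] [DecidableEq M]
    (h : ℝ → ℝ) (s : Θ → ℝ) (u : M → ℕ → ℝ) (m : Θ → M) (S : Finset Θ)
    (θ θ' : Θ) (hθ : θ ∈ S) (hθ' : θ' ∉ S) (hm : m θ' = m θ) :
    W h s u m (insert θ' (S.erase θ)) = W h s u m S - h (s θ) + h (s θ') := by
  unfold W
  have hθ'e : θ' ∉ S.erase θ := fun hc => hθ' (mem_of_mem_erase hc)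
  rw [sum_insert hθ'e, sum_erase_eq_sub hθ]
  have hx : ∀ g, xg m (insert θ' (S.erase θ)) g = xg m S g := by
    intro g
    rw [xg_swap m S θ θ' hθ hθ' g]
    by_cases h2 : m θ = g
    · rw [if_pos h2, if_pos (hm.trans h2)]
      have h1 : 1 ≤ xg m S g := h2 ▸ xg_pos m S θ hθ
      omega
    · rw [if_neg h2, if_neg (fun hc => h2 (hm.symm.trans hc))]
      omega
  simp only [hx]
  ring

lemma W_swap_ne {Θ M : Type*} [DecidableEq Θ] [Fintype M] [DecidableEq M]
    (h : ℝ → ℝ) (s : Θ → ℝ) (u : M → ℕ → ℝ) (m : Θ → M) (S : Finset Θ)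
    (θ θ' : Θ) (hθ : θ ∈ S) (hθ' : θ' ∉ S) (hm : m θ' ≠ m θ) :
    W h s u m (insert θ' (S.erase θ)) =
      W h s u m S + (h (s θ') - h (s θ))
        + (u (m θ') (xg m S (m θ') + 1) - u (m θ') (xg m S (m θ')))
        - (u (m θ) (xg m S (m θ)) - u (m θ) (xg m S (m θ) - 1)) := by
  unfold W
  have hθ'e : θ' ∉ S.erase θ := fun hc => hθ' (mem_of_mem_erase hc)
  rw [sum_insert hθ'e, sum_erase_eq_sub hθ]
  have key : ∑ g : M, u g (xg m (insert θ' (S.erase θ)) g)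
      - ∑ g : M, u g (xg m S g)
      = (u (m θ') (xg m S (m θ') + 1) - u (m θ') (xg m S (m θ')))
        + (u (m θ) (xg m S (m θ) - 1) - u (m θ) (xg m S (m θ))) := by
    rw [← sum_sub_distrib]
    have hsub : ∑ g : M, (u g (xg m (insert θ' (S.erase θ)) g) - u g (xg m S g))
        = ∑ g ∈ ({m θ', m θ} : Finset M),
            (u g (xg m (insert θ' (S.erase θ)) g) - u g (xg m S g)) := by
      symm
      apply sum_subset (subset_univ _)
      intro g _ hg
      simp only [mem_insert, mem_singleton] at hg
      push_neg at hg
      rw [xg_swap m S θ θ' hθ hθ' g, if_neg (fun hc => hg.2 hc.symm),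
        if_neg (fun hc => hg.1 hc.symm)]
      simp
    rw [hsub, sum_pair hm]
    rw [xg_swap m S θ θ' hθ hθ' (m θ'), xg_swap m S θ θ' hθ hθ' (m θ),
      if_neg (fun hc => hm hc.symm), if_neg hm, if_pos rfl, if_pos rfl]
    norm_num
  linarith

/-- If `S` with `|S| = q` is not implemented by the optimal APM `A*`, then some
`S'` with `|S'| = q` has `W(S') > W(S)`; consequently every `W`-maximizing
subset of cardinality `q` is implemented by `A*`. -/
theorem stmt_12 {Θ M : Type*} [Fintype Θ] [DecidableEq Θ] [Fintype M] [DecidableEq M]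
    (s : Θ → ℝ) (hs : Function.Injective s) (hs01 : ∀ θ, s θ ∈ Set.Icc (0:ℝ) 1)
    (m : Θ → M) (q : ℕ) (hq : q ≤ Fintype.card Θ)
    (h : ℝ → ℝ) (hh : StrictMonoOn h (Set.Icc (0:ℝ) 1))
    (u : M → ℕ → ℝ)
    (hu : ∀ g x, u g (x+2) - u g (x+1) ≤ u g (x+1) - u g x) :
    (∀ S : Finset Θ, S.card = q → ¬ ImplementedByAPM h s u m S →
      ∃ S' : Finset Θ, S'.card = q ∧ W h s u m S < W h s u m S') ∧
    (∀ S : Finset Θ, S.card = q →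
      (∀ S' : Finset Θ, S'.card = q → W h s u m S' ≤ W h s u m S) →
      ImplementedByAPM h s u m S) := by
  have part1 : ∀ S : Finset Θ, S.card = q → ¬ ImplementedByAPM h s u m S →
      ∃ S' : Finset Θ, S'.card = q ∧ W h s u m S < W h s u m S' := by
    intro S hcard hnot
    unfold ImplementedByAPM at hnot
    rcases not_and_or.mp hnot with hA | hB
    · push_neg at hA
      obtain ⟨θ, hθ, θ', hθ', hmm, hle⟩ := hA
      have hne : θ' ≠ θ := fun hc => hθ' (hc ▸ hθ)
      have hlt : s θ < s θ' := lt_of_le_of_ne hle (fun hc => hne (hs hc.symm))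
      refine ⟨insert θ' (S.erase θ), by rw [card_swap S θ θ' hθ hθ', hcard], ?_⟩
      rw [W_swap_same h s u m S θ θ' hθ hθ' hmm]
      have := hh (hs01 θ) (hs01 θ') hlt
      linarith
    · push_neg at hB
      obtain ⟨θ, hθ, θ', hθ', hmm, hlt⟩ := hB
      refine ⟨insert θ' (S.erase θ), by rw [card_swap S θ θ' hθ hθ', hcard], ?_⟩
      rw [W_swap_ne h s u m S θ θ' hθ hθ' hmm]
      linarith
  refine ⟨part1, fun S hcard hmax => ?_⟩
  by_contra hnot
  obtain ⟨S', hc', hlt⟩ := part1 S hcard hnot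
  exact absurd (hmax S' hc') (not_le.mpr hlt)
end

section
/- If S ⊆ Θ with |S| = q maximizes W among all subsets of cardinality q, then S is a within-group cutoff allocation: for all θ ∈ S and θ' ∉ S with m(θ) = m(θ'), one has s(θ) > s(θ'). -/
open Finset

/-- If `S` with `|S| = q` maximizes `W` among subsets of cardinality `q`, then
`S` is a within-group cutoff allocation: for all `θ ∈ S` and `θ' ∉ S` with
`m(θ) = m(θ')`, one has `s(θ) > s(θ')`. -/
theorem stmt_13 {Θ M : Type*} [Fintype Θ] [DecidableEq Θ] [Fintype M] [DecidableEq M]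
    (s : Θ → ℝ) (hs : Function.Injective s) (hs01 : ∀ θ, s θ ∈ Set.Icc (0:ℝ) 1)
    (m : Θ → M) (q : ℕ) (hq : q ≤ Fintype.card Θ)
    (h : ℝ → ℝ) (hh : StrictMonoOn h (Set.Icc (0:ℝ) 1))
    (u : M → ℕ → ℝ)
    (S : Finset Θ) (hScard : S.card = q)
    (hmax : ∀ S' : Finset Θ, S'.card = q → W h s u m S' ≤ W h s u m S) :
    ∀ θ ∈ S, ∀ θ' : Θ, θ' ∉ S → m θ = m θ' → s θ' < s θ := by
  intro θ hθ θ' hθ' hm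
  have hne : θ ≠ θ' := fun e => hθ' (e ▸ hθ)
  set S' : Finset Θ := insert θ' (S.erase θ) with hS'
  have hθ'notin : θ' ∉ S.erase θ := fun hc => hθ' (Finset.mem_of_mem_erase hc)
  have hcard : S'.card = q := by
    rw [hS', Finset.card_insert_of_notMem hθ'notin, Finset.card_erase_of_mem hθ,
      hScard]
    have : 0 < q := hScard ▸ Finset.card_pos.mpr ⟨θ, hθ⟩
    omega
  have hxg : ∀ g : M, xg m S' g = xg m S g := by
    intro g
    unfold xg
    rw [hS', Finset.filter_insert, Finset.filter_erase]
    by_cases hg : m θ' = g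
    · rw [if_pos hg]
      have hθf : θ ∈ S.filter (fun x => m x = g) := by
        simp [Finset.mem_filter, hθ, hm ▸ hg, hm.trans hg]
      rw [Finset.card_insert_of_notMem (by
        intro hc
        exact hθ' (Finset.mem_of_mem_filter _ (Finset.mem_of_mem_erase hc))),
        Finset.card_erase_of_mem hθf]
      have : 0 < (S.filter (fun x => m x = g)).card := Finset.card_pos.mpr ⟨θ, hθf⟩
      omega
    · rw [if_neg hg]
      congr 1
      apply Finset.erase_eq_of_notMem
      intro hc
      exact hg (hm ▸ (Finset.mem_filter.mp hc).2)
  have hsum : ∑ x ∈ S', h (s x) = (∑ x ∈ S, h (s x)) - h (s θ) + h (s θ') := by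
    rw [hS', Finset.sum_insert hθ'notin, Finset.sum_erase_eq_sub hθ]
    ring
  have hW : W h s u m S' = W h s u m S - h (s θ) + h (s θ') := by
    unfold W
    rw [hsum]
    simp only [hxg]
    ring
  have hle : h (s θ') ≤ h (s θ) := by
    have := hmax S' hcard
    rw [hW] at this
    linarith
  by_contra hlt
  push_neg at hlt
  have hsne : s θ ≠ s θ' := fun e => hne (hs e)
  have : h (s θ) < h (s θ') := hh (hs01 θ) (hs01 θ') (lt_of_le_of_ne hlt hsne)
  linarith
end
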